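/- arXiv:1507.07778 — 6 statements merged into one kernel-verified Lean document; each statement's English description precedes it below -/
import Mathlib

section
/- Let Γ be a finitely generated group with finitely generated center. If Γ₁, Γ₂ are element-wise commuting subgroups of Γ such that Γ₁ ∪ Γ₂ generates Γ, then each of Γ₁ and Γ₂ is finitely generated. -/
/-- Subgroups of finitely generated commutative groups are finitely generated. -/
lemma subgroup_fg_of_comm {A : Type*} [CommGroup A] (hA : Group.FG A) (K : Subgroup A) :
    K.FG := by
  haveI : AddGroup.FG (Additive A) := GroupFG.iff_add_fg.1 hA
  haveI : Module.Finite ℤ (Additive A) := Module.Finite.iff_addGroup_fg.2 ‹_›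
  haveI : IsNoetherian ℤ (Additive A) := isNoetherian_of_isNoetherianRing_of_finite ℤ _
  rw [Subgroup.fg_iff_add_fg,
    ← AddSubgroup.toIntSubmodule_toAddSubgroup (Subgroup.toAddSubgroup K),
    ← Submodule.fg_iff_addSubgroup_fg]
  exact IsNoetherian.noetherian _

/-- A group is finitely generated if it surjects onto a finitely generated group with
finitely generated kernel. -/
lemma fg_of_surjective_of_fg_ker {G H : Type*} [Group G] [Group H] (f : G →* H)
    (hsurj : Function.Surjective f) (hker : f.ker.FG) (hH : Group.FG H) : Group.FG G := by
  classical
  obtain ⟨S, hS⟩ := hker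
  obtain ⟨T, hT⟩ := Group.fg_def.mp hH
  choose sec hsec using hsurj
  set T' : Finset G := T.image sec with hT'
  refine Group.fg_def.mpr ⟨S ∪ T', ?_⟩
  set P := Subgroup.closure ((S ∪ T' : Finset G) : Set G) with hP
  have hSP : Subgroup.closure (S : Set G) ≤ P :=
    Subgroup.closure_mono (by simp)
  have hT'P : Subgroup.closure ((T' : Finset G) : Set G) ≤ P :=
    Subgroup.closure_mono (by simp)
  rw [eq_top_iff]
  intro g _
  have hfg : f g ∈ Subgroup.closure (T : Set H) := by rw [hT]; trivial
  have hmap : Subgroup.closure (T : Set H) ≤ Subgroup.map f P := by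
    apply Subgroup.closure_le _ |>.2
    intro t ht
    exact ⟨sec t, hT'P (Subgroup.subset_closure (by simp [hT']; exact ⟨t, ht, rfl⟩)), hsec t⟩
  obtain ⟨p, hp, hpg⟩ := hmap hfg
  have : p⁻¹ * g ∈ f.ker := by
    rw [MonoidHom.mem_ker, map_mul, map_inv, hpg, inv_mul_cancel]
  have : p⁻¹ * g ∈ P := hSP (hS ▸ this)
  have := P.mul_mem hp this
  simpa using this

/-- if a finitely generated group with finitely generated center is
generated by two element-wise commuting subgroups, then each subgroup is
finitely generated. -/
theorem stmt2 {G : Type*} [Group G] (hFG : Group.FG G)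
    (hZFG : Group.FG ↥(Subgroup.center G))
    (H₁ H₂ : Subgroup G)
    (hcomm : ∀ a ∈ H₁, ∀ b ∈ H₂, a * b = b * a)
    (hgen : H₁ ⊔ H₂ = ⊤) :
    H₁.FG ∧ H₂.FG := by
  haveI := hFG
  have key : ∀ (K₁ K₂ : Subgroup G), (∀ a ∈ K₁, ∀ b ∈ K₂, a * b = b * a) →
      K₁ ⊔ K₂ = ⊤ → K₁.FG := by
    intro K₁ K₂ hc hg
    have hnorm : K₂.Normal := by
      rw [← Subgroup.normalizer_eq_top_iff, eq_top_iff, ← hg, sup_le_iff]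
      refine ⟨fun a ha => ?_, Subgroup.le_normalizer⟩
      rw [Subgroup.mem_normalizer_iff]
      intro b
      constructor
      · intro hb
        have : a * b = b * a := hc a ha b hb
        have : a * b * a⁻¹ = b := by rw [this]; group
        rw [this]; exact hb
      · intro hb
        have h1 : a * (a * b * a⁻¹) = (a * b * a⁻¹) * a := hc a ha _ hb
        have h2 : (a * b * a⁻¹) * a = a * b := by group
        have h3 : a * (a * b * a⁻¹) = a * b := by rw [h1, h2]
        have h4 : a * b * a⁻¹ = b := mul_left_cancel h3
        rw [h4] at hb; exact hb
    haveI := hnorm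
    have hcen : K₁ ⊓ K₂ ≤ Subgroup.center G := by
      intro x hx
      rw [Subgroup.mem_center_iff]
      have hle : (⊤ : Subgroup G) ≤ Subgroup.centralizer {x} := by
        rw [← hg, sup_le_iff]
        constructor
        · intro a ha
          rw [Subgroup.mem_centralizer_iff]
          intro y hy
          rw [Set.mem_singleton_iff] at hy; subst hy
          exact (hc a ha y hx.2).symm
        · intro b hb
          rw [Subgroup.mem_centralizer_iff]
          intro y hy
          rw [Set.mem_singleton_iff] at hy; subst hy
          exact hc y hx.1 b hb
      intro g
      have := hle (Subgroup.mem_top g)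
      rw [Subgroup.mem_centralizer_iff] at this
      exact (this x rfl).symm
    haveI : Group.FG (G ⧸ K₂) := inferInstance
    set f : K₁ →* G ⧸ K₂ := (QuotientGroup.mk' K₂).comp K₁.subtype with hf
    have hsurj : Function.Surjective f := by
      intro q
      obtain ⟨g, rfl⟩ := QuotientGroup.mk'_surjective K₂ q
      have hgmem : g ∈ K₁ ⊔ K₂ := by rw [hg]; trivial
      rw [← SetLike.mem_coe, Subgroup.mul_normal] at hgmem
      obtain ⟨a, ha, b, hb, rfl⟩ := hgmem
      refine ⟨⟨a, ha⟩, ?_⟩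
      simp only [hf, MonoidHom.comp_apply, Subgroup.coe_subtype, QuotientGroup.mk'_apply]
      rw [QuotientGroup.eq]
      simpa using hb
    have hkeq : f.ker = (K₁ ⊓ K₂).subgroupOf K₁ := by
      ext x
      simp only [hf, MonoidHom.mem_ker, MonoidHom.comp_apply, Subgroup.coe_subtype,
        QuotientGroup.mk'_apply, QuotientGroup.eq_one_iff, Subgroup.mem_subgroupOf,
        Subgroup.mem_inf]
      exact ⟨fun h => ⟨x.2, h⟩, fun h => h.2⟩
    have hker : f.ker.FG := by
      rw [hkeq]
      have hfg2 : ((K₁ ⊓ K₂).subgroupOf (Subgroup.center G)).FG :=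
        @subgroup_fg_of_comm _
          { (inferInstance : Group (Subgroup.center G)) with mul_comm := mul_comm' } hZFG _
      haveI : Group.FG ((K₁ ⊓ K₂).subgroupOf (Subgroup.center G)) :=
        (Group.fg_iff_subgroup_fg _).2 hfg2
      haveI : Group.FG (K₁ ⊓ K₂ : Subgroup G) :=
        Group.fg_of_surjective (f := (Subgroup.subgroupOfEquivOfLe hcen).toMonoidHom)
          (Subgroup.subgroupOfEquivOfLe hcen).surjective
      haveI : Group.FG ((K₁ ⊓ K₂).subgroupOf K₁) :=
        Group.fg_of_surjective
          (f := (Subgroup.subgroupOfEquivOfLe (inf_le_left : K₁ ⊓ K₂ ≤ K₁)).symm.toMonoidHom)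
          (Subgroup.subgroupOfEquivOfLe (inf_le_left : K₁ ⊓ K₂ ≤ K₁)).symm.surjective
      exact (Group.fg_iff_subgroup_fg _).1 ‹_›
    exact (Group.fg_iff_subgroup_fg K₁).1
      (fg_of_surjective_of_fg_ker f hsurj hker inferInstance)
  refine ⟨key H₁ H₂ hcomm hgen, key H₂ H₁ (fun a ha b hb => (hcomm b hb a ha).symm) ?_⟩
  rw [sup_comm]; exact hgen
end

section
/- Let Γ be a finitely generated torsion-free group with finitely generated center. Suppose Γ₁, Γ₂ are element-wise commuting subgroups of Γ with Γ₁ ∪ Γ₂ generating Γ, and suppose Γ₁ has finite index in Γ. Then Γ₂ is isomorphic to ℤ^k for some k ≤ rank of the center of Γ. -/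
/-- `Monoid.IsTorsionFree` as it was defined in Mathlib (Dec 2024); removed since. -/
def Monoid.IsTorsionFree (G : Type*) [Monoid G] : Prop :=
  ∀ g : G, g ≠ 1 → ¬IsOfFinOrder g

open scoped IsMulCommutative

open scoped commutatorElement

private lemma commutator_mul_central_left {K : Type*} [Group K] {z : K}
    (hz : z ∈ Subgroup.center K) (a b : K) : ⁅a * z, b⁆ = ⁅a, b⁆ := by
  have hzb : z * b * z⁻¹ = b := by
    rw [← (Subgroup.mem_center_iff.mp hz b), mul_inv_cancel_right]
  have h1 : ⁅a * z, b⁆ = a * (z * b * z⁻¹) * a⁻¹ * b⁻¹ := by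
    rw [commutatorElement_def]; group
  rw [h1, hzb, commutatorElement_def]

private lemma commutator_mul_central_right {K : Type*} [Group K] {w : K}
    (hw : w ∈ Subgroup.center K) (a b : K) : ⁅a, b * w⁆ = ⁅a, b⁆ := by
  have hwa : w * a⁻¹ * w⁻¹ = a⁻¹ := by
    rw [← (Subgroup.mem_center_iff.mp hw a⁻¹), mul_inv_cancel_right]
  have h1 : ⁅a, b * w⁆ = a * b * (w * a⁻¹ * w⁻¹) * b⁻¹ := by
    rw [commutatorElement_def]; group
  rw [h1, hwa, commutatorElement_def]

/-- Step towards Schur's theorem: if the center has finite index, there are only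
finitely many commutators. -/
private lemma finite_commutatorSet_of_center_finiteIndex {K : Type*} [Group K]
    [(Subgroup.center K).FiniteIndex] : Finite (commutatorSet K) := by
  set Z := Subgroup.center K
  have key : ∀ a b : K,
      ⁅(QuotientGroup.mk a : K ⧸ Z).out, (QuotientGroup.mk b : K ⧸ Z).out⁆ = ⁅a, b⁆ := by
    intro a b
    obtain ⟨z, hza⟩ := QuotientGroup.mk_out_eq_mul Z a
    obtain ⟨w, hwb⟩ := QuotientGroup.mk_out_eq_mul Z b
    rw [hza, hwb, commutator_mul_central_left z.2,
      commutator_mul_central_right w.2]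
  have hsub : commutatorSet K ⊆
      Set.range (fun p : (K ⧸ Z) × (K ⧸ Z) => ⁅p.1.out, p.2.out⁆) := by
    rintro g ⟨a, b, rfl⟩
    exact ⟨(QuotientGroup.mk a, QuotientGroup.mk b), key a b⟩
  exact ((Set.finite_range _).subset hsub).to_subtype

/-- in a finitely generated torsion-free group with finitely generated
center, if two element-wise commuting subgroups generate the group and one of them has
finite index, then the other is free abelian of rank at most the rank of the center. -/
theorem stmt3 {G : Type*} [Group G] (hFG : Group.FG G)
    (hTF : Monoid.IsTorsionFree G)
    (hZFG : Group.FG ↥(Subgroup.center G))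
    (H₁ H₂ : Subgroup G)
    (hcomm : ∀ a ∈ H₁, ∀ b ∈ H₂, a * b = b * a)
    (hgen : H₁ ⊔ H₂ = ⊤)
    (hfi : H₁.FiniteIndex) :
    ∃ k : ℕ, Nonempty (↥H₂ ≃* Multiplicative (Fin k → ℤ)) ∧
      (k : Cardinal) ≤ Module.rank ℤ (Additive ↥(Subgroup.center G)) := by
  classical
  -- Step A: `H₁ ⊓ H₂` is contained in the center of `G`.
  have hA : H₁ ⊓ H₂ ≤ Subgroup.center G := by
    rintro x ⟨hx1, hx2⟩
    rw [Subgroup.mem_center_iff]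
    intro g
    have hsub : H₁ ⊔ H₂ ≤ Subgroup.centralizer {x} := by
      apply sup_le
      · intro a ha
        rw [Subgroup.mem_centralizer_iff]
        intro y hy
        rw [Set.mem_singleton_iff] at hy
        rw [hy]
        exact (hcomm a ha x hx2).symm
      · intro b hb
        rw [Subgroup.mem_centralizer_iff]
        intro y hy
        rw [Set.mem_singleton_iff] at hy
        rw [hy]
        exact hcomm x hx1 b hb
    have hg : g ∈ Subgroup.centralizer {x} := hsub (by rw [hgen]; trivial)
    exact (Subgroup.mem_centralizer_iff.mp hg x rfl).symm
  -- torsion-freeness of `H₂`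
  have hTF₂ : ∀ x : ↥H₂, IsOfFinOrder x → x = 1 := by
    intro x hx
    have hxG : IsOfFinOrder (x : G) := H₂.subtype.isOfFinOrder hx
    by_contra hne
    exact hTF (x : G) (fun h => hne (Subtype.ext h)) hxG
  -- `(center G).subgroupOf H₂` has finite index in `H₂`.
  haveI hfi₂ : ((Subgroup.center G).subgroupOf H₂).FiniteIndex := by
    have hle : H₁.subgroupOf H₂ ≤ (Subgroup.center G).subgroupOf H₂ := by
      intro x hx
      rw [Subgroup.mem_subgroupOf] at hx ⊢
      exact hA ⟨hx, x.2⟩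
    exact Subgroup.finiteIndex_of_le hle
  -- hence the center of `H₂` has finite index in `H₂`.
  haveI hfiZ : (Subgroup.center ↥H₂).FiniteIndex := by
    apply Subgroup.finiteIndex_of_le (H := (Subgroup.center G).subgroupOf H₂)
    intro x hx
    rw [Subgroup.mem_subgroupOf] at hx
    rw [Subgroup.mem_center_iff]
    intro y
    exact Subtype.ext ((Subgroup.mem_center_iff.mp hx) y)
  -- Schur: the commutator subgroup of `H₂` is finite, hence trivial, so `H₂` is abelian.
  haveI : Finite (commutatorSet ↥H₂) := finite_commutatorSet_of_center_finiteIndex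
  haveI hfin : Finite ↥(_root_.commutator ↥H₂) := inferInstance
  have hc : ∀ a b : ↥H₂, a * b = b * a := by
    intro a b
    have h1 : ⁅a, b⁆ ∈ _root_.commutator ↥H₂ :=
      Subgroup.commutator_mem_commutator (Subgroup.mem_top a) (Subgroup.mem_top b)
    have h2 : IsOfFinOrder (⟨⁅a, b⁆, h1⟩ : ↥(_root_.commutator ↥H₂)) :=
      isOfFinOrder_of_finite _
    have h3 : IsOfFinOrder (⁅a, b⁆) :=
      (_root_.commutator ↥H₂).subtype.isOfFinOrder h2
    exact commutatorElement_eq_one_iff_mul_comm.mp (hTF₂ _ h3)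
  letI : CommGroup ↥H₂ := { (inferInstance : Group ↥H₂) with mul_comm := hc }
  -- the `n`-th power map embeds `H₂` into the center of `G`.
  set n := ((Subgroup.center G).subgroupOf H₂).index with hn
  have hn0 : n ≠ 0 := hfi₂.index_ne_zero
  have hpow : ∀ x : ↥H₂, (x : G) ^ n ∈ Subgroup.center G := by
    intro x
    have := Subgroup.pow_index_mem ((Subgroup.center G).subgroupOf H₂) x
    rw [Subgroup.mem_subgroupOf] at this
    simpa using this
  let φ : ↥H₂ →* ↥(Subgroup.center G) :=
    { toFun := fun x => ⟨(x : G) ^ n, hpow x⟩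
      map_one' := by ext; simp
      map_mul' := fun x y => by
        ext
        have hcxy : Commute (x : G) (y : G) := congrArg Subtype.val (hc x y)
        simpa using hcxy.mul_pow n }
  have hφinj : Function.Injective φ := by
    apply (injective_iff_map_eq_one φ).mpr
    intro x hx
    have hxn : (x : G) ^ n = 1 := congrArg Subtype.val hx
    have hfo : IsOfFinOrder (x : G) :=
      isOfFinOrder_iff_pow_eq_one.mpr ⟨n, Nat.pos_of_ne_zero hn0, hxn⟩
    by_contra hne
    exact hTF (x : G) (fun h => hne (Subtype.ext h)) hfo
  -- pass to `ℤ`-modules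
  haveI : Module.Finite ℤ (Additive ↥(Subgroup.center G)) :=
    Module.Finite.iff_addGroup_fg.mpr (GroupFG.iff_add_fg.mp hZFG)
  let ψ : Additive ↥H₂ →ₗ[ℤ] Additive ↥(Subgroup.center G) :=
    (MonoidHom.toAdditive φ).toIntLinearMap
  have hψinj : Function.Injective ψ := hφinj
  haveI : IsNoetherian ℤ (Additive ↥(Subgroup.center G)) :=
    isNoetherian_of_isNoetherianRing_of_finite ℤ _
  haveI : IsNoetherian ℤ (Additive ↥H₂) := isNoetherian_of_injective ψ hψinj
  haveI : NoZeroSMulDivisors ℤ (Additive ↥H₂) := by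
    refine ⟨fun {c x} h => ?_⟩
    by_cases hc0 : c = 0
    · exact Or.inl hc0
    · refine Or.inr ?_
      have hx1 : (Additive.toMul x) ^ c = 1 := h
      have hfo : IsOfFinOrder (Additive.toMul x) :=
        isOfFinOrder_iff_zpow_eq_one.mpr ⟨c, hc0, hx1⟩
      exact hTF₂ _ hfo
  obtain ⟨k, b⟩ := Module.basisOfFiniteTypeTorsionFree' (R := ℤ) (M := Additive ↥H₂)
  refine ⟨k, ⟨AddEquiv.toMultiplicativeRight b.equivFun.toAddEquiv⟩, ?_⟩
  have h1 : Module.rank ℤ (Additive ↥H₂) = k := by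
    simpa using b.mk_eq_rank.symm
  calc (k : Cardinal) = Module.rank ℤ (Additive ↥H₂) := h1.symm
    _ ≤ Module.rank ℤ (Additive ↥(Subgroup.center G)) :=
        ψ.rank_le_of_injective hψinj
end

section
/- Suppose every finite index subgroup of a group Γ has finite center. Then Γ is presentable by products if and only if Γ is infinite-index presentable by products (IIPP). -/
/-- A group is presentable by products. -/
def PresentableByProducts (G : Type*) [Group G] : Prop :=
  ∃ H K : Subgroup G, (∀ a ∈ H, ∀ b ∈ K, a * b = b * a) ∧
    Infinite ↥H ∧ Infinite ↥K ∧ (H ⊔ K).FiniteIndex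

/-- A group is infinite-index presentable by products (IIPP). -/
def IIPP (G : Type*) [Group G] : Prop :=
  ∃ H K : Subgroup G, (∀ a ∈ H, ∀ b ∈ K, a * b = b * a) ∧
    H.index = 0 ∧ K.index = 0 ∧ (H ⊔ K).FiniteIndex

/-- Product decomposition of the join of two element-wise commuting subgroups. -/
lemma mem_sup_of_commute {G : Type*} [Group G] {H K : Subgroup G}
    (hc : ∀ a ∈ H, ∀ b ∈ K, a * b = b * a) {x : G} (hx : x ∈ H ⊔ K) :
    ∃ h ∈ H, ∃ k ∈ K, x = h * k := by
  rw [Subgroup.sup_eq_closure] at hx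
  induction hx using Subgroup.closure_induction with
  | mem y hy =>
      rcases hy with hy | hy
      · exact ⟨y, hy, 1, one_mem _, (mul_one y).symm⟩
      · exact ⟨1, one_mem _, y, hy, (one_mul y).symm⟩
  | one => exact ⟨1, one_mem _, 1, one_mem _, (one_mul 1).symm⟩
  | mul a b ha hb iha ihb =>
      obtain ⟨h1, hh1, k1, hk1, rfl⟩ := iha
      obtain ⟨h2, hh2, k2, hk2, rfl⟩ := ihb
      refine ⟨h1 * h2, mul_mem hh1 hh2, k1 * k2, mul_mem hk1 hk2, ?_⟩
      have := hc h2 hh2 k1 hk1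
      simp only [mul_assoc]
      rw [← mul_assoc k1 h2, ← this, mul_assoc]
  | inv a ha iha =>
      obtain ⟨h1, hh1, k1, hk1, rfl⟩ := iha
      refine ⟨h1⁻¹, inv_mem hh1, k1⁻¹, inv_mem hk1, ?_⟩
      rw [mul_inv_rev, hc h1⁻¹ (inv_mem hh1) k1⁻¹ (inv_mem hk1)]

/-- If `K` is finite and `H ⊔ K` has finite index, then `H` has finite index. -/
lemma finiteIndex_of_commute_finite {G : Type*} [Group G] {H K : Subgroup G}
    (hc : ∀ a ∈ H, ∀ b ∈ K, a * b = b * a) (hK : Finite ↥K)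
    (hfi : (H ⊔ K).FiniteIndex) : H.index ≠ 0 := by
  have hle : H ≤ H ⊔ K := le_sup_left
  -- the cosets of `H` in `H ⊔ K` are represented by elements of `K`
  have hsurj : Function.Surjective
      (fun k : ↥K => QuotientGroup.mk (s := H.subgroupOf (H ⊔ K))
        (⟨(k : G), Subgroup.mem_sup_right k.2⟩ : ↥(H ⊔ K))) := by
    intro q
    obtain ⟨⟨x, hx⟩, rfl⟩ := QuotientGroup.mk_surjective q
    obtain ⟨a, ha, b, hb, rfl⟩ := mem_sup_of_commute hc hx
    refine ⟨⟨b, hb⟩, ?_⟩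
    apply (QuotientGroup.eq).mpr
    show (b⁻¹ * (a * b)) ∈ H
    rw [hc a ha b hb, ← mul_assoc, inv_mul_cancel, one_mul]
    exact ha
  have hfq : Finite ((H ⊔ K : Subgroup G) ⧸ H.subgroupOf (H ⊔ K)) :=
    Finite.of_surjective _ hsurj
  have hrel : H.relIndex (H ⊔ K) ≠ 0 := by
    have : Nonempty ((H ⊔ K : Subgroup G) ⧸ H.subgroupOf (H ⊔ K)) := ⟨QuotientGroup.mk 1⟩
    simpa [Subgroup.relIndex, Subgroup.index] using Nat.card_ne_zero.mpr ⟨this, hfq⟩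
  rw [← Subgroup.relIndex_mul_index hle]
  exact mul_ne_zero hrel hfi.index_ne_zero

/-- If `K` is infinite and commutes elementwise with `H`, and every finite index subgroup has
finite center, then `H` has infinite index. -/
lemma index_eq_zero_of_commute_infinite {G : Type*} [Group G] {H K : Subgroup G}
    (h : ∀ H : Subgroup G, H.FiniteIndex → Finite ↥(Subgroup.center ↥H))
    (hc : ∀ a ∈ H, ∀ b ∈ K, a * b = b * a) (hK : Infinite ↥K) : H.index = 0 := by
  by_contra hne
  haveI : H.FiniteIndex := ⟨hne⟩
  haveI hZ : Finite ↥(Subgroup.center ↥H) := h H ‹_›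
  -- `H.subgroupOf K` injects into the center of `H`
  have hfin : Finite ↥(H.subgroupOf K) := by
    have : Function.Injective
        (fun x : ↥(H.subgroupOf K) =>
          (⟨⟨((x : ↥K) : G), x.2⟩, by
            rw [Subgroup.mem_center_iff]
            intro g
            ext
            exact hc (g : G) g.2 ((x : ↥K) : G) (x : ↥K).2⟩ :
            ↥(Subgroup.center ↥H))) := by
      intro a b hab
      simp only [Subtype.mk.injEq] at hab
      ext
      have := congrArg Subtype.val hab
      exact this
    exact Finite.of_injective _ this
  haveI : (H.subgroupOf K).FiniteIndex := Subgroup.instFiniteIndex_subgroupOf H K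
  haveI : Finite (↥K ⧸ H.subgroupOf K) := Subgroup.finite_quotient_of_finiteIndex
  haveI : Finite ↥K := Finite.of_equiv _ (Subgroup.groupEquivQuotientProdSubgroup (s := H.subgroupOf K)).symm
  exact not_finite ↥K

/-- if every finite index subgroup of `Γ` has finite center, then `Γ` is
presentable by products iff it is IIPP. -/
theorem stmt8 {G : Type*} [Group G]
    (h : ∀ H : Subgroup G, H.FiniteIndex → Finite ↥(Subgroup.center ↥H)) :
    PresentableByProducts G ↔ IIPP G := by
  constructor
  · rintro ⟨H, K, hc, hH, hK, hfi⟩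
    refine ⟨H, K, hc, ?_, ?_, hfi⟩
    · exact index_eq_zero_of_commute_infinite h hc hK
    · exact index_eq_zero_of_commute_infinite h
        (fun a ha b hb => (hc b hb a ha).symm) hH
  · rintro ⟨H, K, hc, hHi, hKi, hfi⟩
    refine ⟨H, K, hc, ?_, ?_, hfi⟩
    · rw [← not_finite_iff_infinite]
      intro hfin
      exact finiteIndex_of_commute_finite (H := K) (K := H)
        (fun a ha b hb => (hc b hb a ha).symm) hfin (sup_comm H K ▸ hfi) hKi
    · rw [← not_finite_iff_infinite]
      intro hfin
      exact finiteIndex_of_commute_finite hc hfin hfi hHi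
end

section
/- The 5-dimensional integral Heisenberg group H₅ = ⟨x, y, u, v, z | [x,y] = [u,v] = z, all other pairs of generators commute⟩ is infinite-index presentable by products: the subgroups Γ₁ = ⟨x, y, z⟩ and Γ₂ = ⟨u, v, z⟩ commute element-wise, have infinite index in H₅, and satisfy Γ₁Γ₂ = H₅. -/
open scoped commutatorElement

/-- Relators of the 5-dimensional integral Heisenberg group
`H₅ = ⟨x, y, u, v, z | [x,y] = [u,v] = z, all other pairs of generators commute⟩`,
with generators indexed `x = 0, y = 1, u = 2, v = 3, z = 4`. -/
def h5Rels : Set (FreeGroup (Fin 5)) :=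
  let x : FreeGroup (Fin 5) := FreeGroup.of 0
  let y : FreeGroup (Fin 5) := FreeGroup.of 1
  let u : FreeGroup (Fin 5) := FreeGroup.of 2
  let v : FreeGroup (Fin 5) := FreeGroup.of 3
  let z : FreeGroup (Fin 5) := FreeGroup.of 4
  { ⁅x, y⁆ * z⁻¹, ⁅u, v⁆ * z⁻¹,
    ⁅x, u⁆, ⁅x, v⁆, ⁅y, u⁆, ⁅y, v⁆,
    ⁅x, z⁆, ⁅y, z⁆, ⁅u, z⁆, ⁅v, z⁆ }

/-- The 5-dimensional integral Heisenberg group. -/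
abbrev H5 := PresentedGroup h5Rels

/-- The images of the generators in `H₅`. -/
def h5gen (i : Fin 5) : H5 := PresentedGroup.of i

/-- `Γ₁ = ⟨x, y, z⟩`. -/
def H5Γ₁ : Subgroup H5 := Subgroup.closure {h5gen 0, h5gen 1, h5gen 4}

/-- `Γ₂ = ⟨u, v, z⟩`. -/
def H5Γ₂ : Subgroup H5 := Subgroup.closure {h5gen 2, h5gen 3, h5gen 4}

/- ### Auxiliary lemmas -/

lemma h5rel_eq_one {r : FreeGroup (Fin 5)} (hr : r ∈ h5Rels) :
    PresentedGroup.mk h5Rels r = 1 := by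
  have : r ∈ Subgroup.normalClosure h5Rels := Subgroup.subset_normalClosure hr
  exact (QuotientGroup.eq_one_iff r).mpr this

lemma h5gen_commute {i j : Fin 5}
    (hij : ⁅(FreeGroup.of i : FreeGroup (Fin 5)), FreeGroup.of j⁆ ∈ h5Rels) :
    Commute (h5gen i) (h5gen j) := by
  have h := h5rel_eq_one hij
  rw [map_commutatorElement] at h
  exact commutatorElement_eq_one_iff_commute.mp h

lemma mem_rels_xu : ⁅(FreeGroup.of 0 : FreeGroup (Fin 5)), FreeGroup.of 2⁆ ∈ h5Rels := by
  simp [h5Rels]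
lemma mem_rels_xv : ⁅(FreeGroup.of 0 : FreeGroup (Fin 5)), FreeGroup.of 3⁆ ∈ h5Rels := by
  simp [h5Rels]
lemma mem_rels_yu : ⁅(FreeGroup.of 1 : FreeGroup (Fin 5)), FreeGroup.of 2⁆ ∈ h5Rels := by
  simp [h5Rels]
lemma mem_rels_yv : ⁅(FreeGroup.of 1 : FreeGroup (Fin 5)), FreeGroup.of 3⁆ ∈ h5Rels := by
  simp [h5Rels]
lemma mem_rels_xz : ⁅(FreeGroup.of 0 : FreeGroup (Fin 5)), FreeGroup.of 4⁆ ∈ h5Rels := by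
  simp [h5Rels]
lemma mem_rels_yz : ⁅(FreeGroup.of 1 : FreeGroup (Fin 5)), FreeGroup.of 4⁆ ∈ h5Rels := by
  simp [h5Rels]
lemma mem_rels_uz : ⁅(FreeGroup.of 2 : FreeGroup (Fin 5)), FreeGroup.of 4⁆ ∈ h5Rels := by
  simp [h5Rels]
lemma mem_rels_vz : ⁅(FreeGroup.of 3 : FreeGroup (Fin 5)), FreeGroup.of 4⁆ ∈ h5Rels := by
  simp [h5Rels]

/-- Elementwise commuting of the two subgroups. -/
lemma h5_commutes : ∀ a ∈ H5Γ₁, ∀ b ∈ H5Γ₂, a * b = b * a := by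
  have hgen : ∀ s ∈ ({h5gen 0, h5gen 1, h5gen 4} : Set H5),
      ∀ t ∈ ({h5gen 2, h5gen 3, h5gen 4} : Set H5), Commute s t := by
    rintro s (rfl|rfl|rfl) t (rfl|rfl|rfl)
    · exact h5gen_commute mem_rels_xu
    · exact h5gen_commute mem_rels_xv
    · exact h5gen_commute mem_rels_xz
    · exact h5gen_commute mem_rels_yu
    · exact h5gen_commute mem_rels_yv
    · exact h5gen_commute mem_rels_yz
    · exact (h5gen_commute mem_rels_uz).symm
    · exact (h5gen_commute mem_rels_vz).symm
    · exact Commute.refl _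
  have key : H5Γ₁ ≤ Subgroup.centralizer (H5Γ₂ : Set H5) := by
    rw [H5Γ₁]
    apply Subgroup.closure_le _ |>.mpr
    intro s hs
    rw [SetLike.mem_coe, Subgroup.mem_centralizer_iff]
    intro g hg
    have : g ∈ Subgroup.centralizer {s} := by
      revert g
      have : H5Γ₂ ≤ Subgroup.centralizer {s} := by
        rw [H5Γ₂]
        apply Subgroup.closure_le _ |>.mpr
        intro t ht
        rw [SetLike.mem_coe, Subgroup.mem_centralizer_iff]
        intro g' hg'
        rw [Set.mem_singleton_iff] at hg'
        rw [hg']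
        exact hgen s hs t ht
      exact fun g hg => this hg
    exact ((Subgroup.mem_centralizer_iff.mp this) s rfl).symm
  intro a ha b hb
  exact ((Subgroup.mem_centralizer_iff.mp (key ha)) b hb).symm

/-- A homomorphism to `Multiplicative ℤ` killing all generators except the `i`-th
(where `i` is not `4` and the images of commutators vanish automatically). -/
noncomputable def h5proj (i : Fin 5) (hi : i ≠ 4) : H5 →* Multiplicative ℤ := by
  refine PresentedGroup.toGroup (f := fun j => if j = i then Multiplicative.ofAdd 1 else 1) ?_
  intro r hr
  have hcomm : ∀ a b : FreeGroup (Fin 5),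
      (FreeGroup.lift fun j => if j = i then Multiplicative.ofAdd (1:ℤ) else 1) ⁅a, b⁆ = 1 := by
    intro a b
    rw [map_commutatorElement]
    exact commutatorElement_eq_one_iff_commute.mpr (Commute.all _ _)
  have hz : (FreeGroup.lift fun j => if j = i then Multiplicative.ofAdd (1:ℤ) else 1)
      (FreeGroup.of 4) = 1 := by
    simp [if_neg (Ne.symm hi)]
  simp only [h5Rels, Set.mem_insert_iff, Set.mem_singleton_iff] at hr
  rcases hr with rfl|rfl|rfl|rfl|rfl|rfl|rfl|rfl|rfl|rfl <;>
    simp [hcomm, hz]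

lemma h5proj_gen (i : Fin 5) (hi : i ≠ 4) (j : Fin 5) :
    h5proj i hi (h5gen j) = if j = i then Multiplicative.ofAdd 1 else 1 :=
  PresentedGroup.toGroup.of _

lemma h5proj_surjective (i : Fin 5) (hi : i ≠ 4) : Function.Surjective (h5proj i hi) := by
  intro m
  refine ⟨(h5gen i) ^ (Multiplicative.toAdd m), ?_⟩
  rw [map_zpow, h5proj_gen i hi i, if_pos rfl, ← ofAdd_zsmul, smul_eq_mul, mul_one, ofAdd_toAdd]

lemma index_zero_of_le_ker (i : Fin 5) (hi : i ≠ 4) (H : Subgroup H5)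
    (hH : H ≤ (h5proj i hi).ker) : H.index = 0 := by
  have hker : (h5proj i hi).ker.index = 0 := by
    rw [Subgroup.index_ker]
    rw [MonoidHom.range_eq_top_of_surjective _ (h5proj_surjective i hi)]
    have : Nat.card (⊤ : Subgroup (Multiplicative ℤ)) = Nat.card (Multiplicative ℤ) :=
      Nat.card_congr Subgroup.topEquiv.toEquiv
    rw [this]
    exact Nat.card_eq_zero_of_infinite
  have := Subgroup.index_dvd_of_le hH
  rw [hker] at this
  exact zero_dvd_iff.mp this

lemma h5Γ₁_index : H5Γ₁.index = 0 := by
  apply index_zero_of_le_ker 2 (by decide) H5Γ₁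
  rw [H5Γ₁]
  apply Subgroup.closure_le _ |>.mpr
  rintro s (rfl|rfl|rfl) <;>
    · rw [SetLike.mem_coe, MonoidHom.mem_ker, h5proj_gen]
      decide

lemma h5Γ₂_index : H5Γ₂.index = 0 := by
  apply index_zero_of_le_ker 0 (by decide) H5Γ₂
  rw [H5Γ₂]
  apply Subgroup.closure_le _ |>.mpr
  rintro s (rfl|rfl|rfl) <;>
    · rw [SetLike.mem_coe, MonoidHom.mem_ker, h5proj_gen]
      decide

lemma h5_sup : H5Γ₁ ⊔ H5Γ₂ = ⊤ := by
  rw [eq_top_iff, ← PresentedGroup.closure_range_of h5Rels]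
  apply Subgroup.closure_le _ |>.mpr
  rintro g ⟨i, rfl⟩
  fin_cases i
  · exact Subgroup.mem_sup_left (Subgroup.subset_closure (by simp [h5gen]))
  · exact Subgroup.mem_sup_left (Subgroup.subset_closure (by simp [h5gen]))
  · exact Subgroup.mem_sup_right (Subgroup.subset_closure (by simp [h5gen]))
  · exact Subgroup.mem_sup_right (Subgroup.subset_closure (by simp [h5gen]))
  · exact Subgroup.mem_sup_left (Subgroup.subset_closure (by simp [h5gen]))

/-- `H₅` is IIPP: the subgroups `Γ₁ = ⟨x,y,z⟩` and `Γ₂ = ⟨u,v,z⟩`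
commute element-wise, have infinite index, and `Γ₁Γ₂ = H₅`. -/
theorem stmt14 :
    (∀ a ∈ H5Γ₁, ∀ b ∈ H5Γ₂, a * b = b * a) ∧
    H5Γ₁.index = 0 ∧ H5Γ₂.index = 0 ∧ H5Γ₁ ⊔ H5Γ₂ = ⊤ ∧ IIPP H5 := by
  refine ⟨h5_commutes, h5Γ₁_index, h5Γ₂_index, h5_sup, H5Γ₁, H5Γ₂, h5_commutes,
    h5Γ₁_index, h5Γ₂_index, ?_⟩
  rw [h5_sup]
  exact ⟨by simp [Subgroup.index_top]⟩
end

section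
/- The 5-dimensional integral Heisenberg group H₅ is irreducible: no finite index subgroup of H₅ is isomorphic to a direct product of two nontrivial groups. -/
set_option linter.unnecessarySeqFocus false
set_option linter.unreachableTactic false
set_option linter.unusedTactic false

open scoped commutatorElement


@[ext] structure Md where
  a : ℤ
  b : ℤ
  c : ℤ
  d : ℤ
  e : ℤ

namespace Md

instance : Mul Md := ⟨fun g h => ⟨g.a + h.a, g.b + h.b, g.c + h.c, g.d + h.d,
    g.e + h.e - h.a * g.b - h.c * g.d⟩⟩
instance : One Md := ⟨⟨0, 0, 0, 0, 0⟩⟩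
instance : Inv Md := ⟨fun g => ⟨-g.a, -g.b, -g.c, -g.d, -g.e - g.a * g.b - g.c * g.d⟩⟩

@[simp] lemma mul_a (g h : Md) : (g * h).a = g.a + h.a := rfl
@[simp] lemma mul_b (g h : Md) : (g * h).b = g.b + h.b := rfl
@[simp] lemma mul_c (g h : Md) : (g * h).c = g.c + h.c := rfl
@[simp] lemma mul_d (g h : Md) : (g * h).d = g.d + h.d := rfl
@[simp] lemma mul_e (g h : Md) : (g * h).e = g.e + h.e - h.a * g.b - h.c * g.d := rfl
@[simp] lemma one_a : (1 : Md).a = 0 := rfl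
@[simp] lemma one_b : (1 : Md).b = 0 := rfl
@[simp] lemma one_c : (1 : Md).c = 0 := rfl
@[simp] lemma one_d : (1 : Md).d = 0 := rfl
@[simp] lemma one_e : (1 : Md).e = 0 := rfl
@[simp] lemma inv_a (g : Md) : (g⁻¹).a = -g.a := rfl
@[simp] lemma inv_b (g : Md) : (g⁻¹).b = -g.b := rfl
@[simp] lemma inv_c (g : Md) : (g⁻¹).c = -g.c := rfl
@[simp] lemma inv_d (g : Md) : (g⁻¹).d = -g.d := rfl
@[simp] lemma inv_e (g : Md) : (g⁻¹).e = -g.e - g.a * g.b - g.c * g.d := rfl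

instance : Group Md where
  mul_assoc g h k := by ext <;> simp <;> ring
  one_mul g := by ext <;> simp
  mul_one g := by ext <;> simp
  inv_mul_cancel g := by ext <;> (simp; try ring)

/-- coordinate homs -/
def pa : Md →* Multiplicative ℤ :=
  MonoidHom.mk' (fun g => Multiplicative.ofAdd g.a) (fun g h => by simp [← ofAdd_add])
def pb : Md →* Multiplicative ℤ :=
  MonoidHom.mk' (fun g => Multiplicative.ofAdd g.b) (fun g h => by simp [← ofAdd_add])
def pc : Md →* Multiplicative ℤ :=
  MonoidHom.mk' (fun g => Multiplicative.ofAdd g.c) (fun g h => by simp [← ofAdd_add])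
def pd : Md →* Multiplicative ℤ :=
  MonoidHom.mk' (fun g => Multiplicative.ofAdd g.d) (fun g h => by simp [← ofAdd_add])

/-- basis one-parameter subgroups -/
def x1 : Multiplicative ℤ →* Md :=
  MonoidHom.mk' (fun t => ⟨t.toAdd, 0, 0, 0, 0⟩) (fun s t => by ext <;> simp)
def x2 : Multiplicative ℤ →* Md :=
  MonoidHom.mk' (fun t => ⟨0, t.toAdd, 0, 0, 0⟩) (fun s t => by ext <;> simp)
def x3 : Multiplicative ℤ →* Md :=
  MonoidHom.mk' (fun t => ⟨0, 0, t.toAdd, 0, 0⟩) (fun s t => by ext <;> simp)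
def x4 : Multiplicative ℤ →* Md :=
  MonoidHom.mk' (fun t => ⟨0, 0, 0, t.toAdd, 0⟩) (fun s t => by ext <;> simp)
def x5 : Multiplicative ℤ →* Md :=
  MonoidHom.mk' (fun t => ⟨0, 0, 0, 0, t.toAdd⟩) (fun s t => by ext <;> simp)

lemma toAdd_pow_eq (s n : ℤ) : Multiplicative.toAdd ((Multiplicative.ofAdd s) ^ n) = n * s := by
  rw [toAdd_zpow]; simp

lemma e1_zpow (n : ℤ) : (⟨1,0,0,0,0⟩ : Md) ^ n = ⟨n,0,0,0,0⟩ := by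
  calc (⟨1,0,0,0,0⟩ : Md) ^ n = x1 ((Multiplicative.ofAdd (1:ℤ)) ^ n) := (map_zpow x1 _ n).symm
  _ = ⟨Multiplicative.toAdd ((Multiplicative.ofAdd (1:ℤ)) ^ n),0,0,0,0⟩ := rfl
  _ = ⟨n,0,0,0,0⟩ := by rw [toAdd_pow_eq]; norm_num

lemma e2_zpow (n : ℤ) : (⟨0,1,0,0,0⟩ : Md) ^ n = ⟨0,n,0,0,0⟩ := by
  calc (⟨0,1,0,0,0⟩ : Md) ^ n = x2 ((Multiplicative.ofAdd (1:ℤ)) ^ n) := (map_zpow x2 _ n).symm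
  _ = ⟨0,Multiplicative.toAdd ((Multiplicative.ofAdd (1:ℤ)) ^ n),0,0,0⟩ := rfl
  _ = ⟨0,n,0,0,0⟩ := by rw [toAdd_pow_eq]; norm_num

lemma e3_zpow (n : ℤ) : (⟨0,0,1,0,0⟩ : Md) ^ n = ⟨0,0,n,0,0⟩ := by
  calc (⟨0,0,1,0,0⟩ : Md) ^ n = x3 ((Multiplicative.ofAdd (1:ℤ)) ^ n) := (map_zpow x3 _ n).symm
  _ = ⟨0,0,Multiplicative.toAdd ((Multiplicative.ofAdd (1:ℤ)) ^ n),0,0⟩ := rfl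
  _ = ⟨0,0,n,0,0⟩ := by rw [toAdd_pow_eq]; norm_num

lemma e4_zpow (n : ℤ) : (⟨0,0,0,1,0⟩ : Md) ^ n = ⟨0,0,0,n,0⟩ := by
  calc (⟨0,0,0,1,0⟩ : Md) ^ n = x4 ((Multiplicative.ofAdd (1:ℤ)) ^ n) := (map_zpow x4 _ n).symm
  _ = ⟨0,0,0,Multiplicative.toAdd ((Multiplicative.ofAdd (1:ℤ)) ^ n),0⟩ := rfl
  _ = ⟨0,0,0,n,0⟩ := by rw [toAdd_pow_eq]; norm_num

lemma e5_zpow (n : ℤ) : (⟨0,0,0,0,1⟩ : Md) ^ n = ⟨0,0,0,0,n⟩ := by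
  calc (⟨0,0,0,0,1⟩ : Md) ^ n = x5 ((Multiplicative.ofAdd (1:ℤ)) ^ n) := (map_zpow x5 _ n).symm
  _ = ⟨0,0,0,0,Multiplicative.toAdd ((Multiplicative.ofAdd (1:ℤ)) ^ n)⟩ := rfl
  _ = ⟨0,0,0,0,n⟩ := by rw [toAdd_pow_eq]; norm_num

lemma central_zpow (s n : ℤ) : (⟨0,0,0,0,s⟩ : Md) ^ n = ⟨0,0,0,0,n*s⟩ := by
  calc (⟨0,0,0,0,s⟩ : Md) ^ n = x5 ((Multiplicative.ofAdd s) ^ n) := (map_zpow x5 _ n).symm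
  _ = ⟨0,0,0,0,Multiplicative.toAdd ((Multiplicative.ofAdd s) ^ n)⟩ := rfl
  _ = ⟨0,0,0,0,n*s⟩ := by rw [toAdd_pow_eq]

lemma a_zpow (g : Md) (n : ℤ) : (g ^ n).a = n * g.a := by
  have h := congrArg Multiplicative.toAdd (map_zpow pa g n)
  rw [toAdd_zpow] at h
  simpa [pa] using h
lemma b_zpow (g : Md) (n : ℤ) : (g ^ n).b = n * g.b := by
  have h := congrArg Multiplicative.toAdd (map_zpow pb g n)
  rw [toAdd_zpow] at h
  simpa [pb] using h
lemma c_zpow (g : Md) (n : ℤ) : (g ^ n).c = n * g.c := by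
  have h := congrArg Multiplicative.toAdd (map_zpow pc g n)
  rw [toAdd_zpow] at h
  simpa [pc] using h
lemma d_zpow (g : Md) (n : ℤ) : (g ^ n).d = n * g.d := by
  have h := congrArg Multiplicative.toAdd (map_zpow pd g n)
  rw [toAdd_zpow] at h
  simpa [pd] using h

lemma torsionfree {g : Md} {n : ℤ} (hn : n ≠ 0) (h : g ^ n = 1) : g = 1 := by
  have ha := a_zpow g n; have hb := b_zpow g n
  have hc := c_zpow g n; have hd := d_zpow g n
  rw [h] at ha hb hc hd
  simp at ha hb hc hd
  have ha' : g.a = 0 := by rcases ha with h' | h' <;> simp_all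
  have hb' : g.b = 0 := by rcases hb with h' | h' <;> simp_all
  have hc' : g.c = 0 := by rcases hc with h' | h' <;> simp_all
  have hd' : g.d = 0 := by rcases hd with h' | h' <;> simp_all
  have hg : g = ⟨0,0,0,0,g.e⟩ := by ext <;> simp_all
  rw [hg, central_zpow] at h
  have h5 : n * g.e = 0 := by simpa using congrArg Md.e h
  rcases mul_eq_zero.mp h5 with h' | h'
  · exact absurd h' hn
  · rw [hg, h']; rfl

lemma class_two (g h k : Md) : ⁅⁅g, h⁆, k⁆ = 1 := by
  have h4 : ∀ p q : Md, p.a = 0 → p.b = 0 → p.c = 0 → p.d = 0 → p * q = q * p := by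
    intro p q ha hb hc hd; ext <;> simp [ha, hb, hc, hd] <;> ring
  exact commutatorElement_eq_one_iff_mul_comm.mpr
    (h4 _ _ (by simp [commutatorElement_def]; try ring) (by simp [commutatorElement_def]; try ring)
      (by simp [commutatorElement_def]; try ring) (by simp [commutatorElement_def]; try ring))

end Md


section Hei
variable {G : Type*} [Group G] {x y z : G}

lemma hei_inv_x (hxz : Commute x z) (h : y * x = x * (y * z)) :
    y * x⁻¹ = x⁻¹ * (y * z⁻¹) := by
  have h1 : x * y = y * (x * z⁻¹) := by
    have : y * x * z⁻¹ = x * (y * z) * z⁻¹ := by rw [h]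
    calc x * y = x * (y * (z * z⁻¹)) := by simp
    _ = x * (y * z) * z⁻¹ := by simp [mul_assoc]
    _ = y * x * z⁻¹ := by rw [← h]
    _ = y * (x * z⁻¹) := by rw [mul_assoc]
  calc y * x⁻¹ = x⁻¹ * (x * y) * x⁻¹ := by simp [mul_assoc]
  _ = x⁻¹ * (y * (x * z⁻¹)) * x⁻¹ := by rw [h1]
  _ = x⁻¹ * (y * (z⁻¹ * (x * x⁻¹))) := by
      rw [(hxz.inv_right.eq : x * z⁻¹ = z⁻¹ * x)]; simp [mul_assoc]
  _ = x⁻¹ * (y * z⁻¹) := by simp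

lemma hei_inv_y (hyz : Commute y z) (h : y * x = x * (y * z)) :
    y⁻¹ * x = x * (y⁻¹ * z⁻¹) := by
  have h2 : x * y⁻¹ = y⁻¹ * (x * z) := by
    calc x * y⁻¹ = y⁻¹ * (y * x) * y⁻¹ := by simp [mul_assoc]
    _ = y⁻¹ * (x * (y * z)) * y⁻¹ := by rw [h]
    _ = y⁻¹ * (x * (z * (y * y⁻¹))) := by
        rw [(hyz.eq : y * z = z * y)]; simp [mul_assoc]
    _ = y⁻¹ * (x * z) := by simp
  calc y⁻¹ * x = y⁻¹ * (x * z) * z⁻¹ := by simp [mul_assoc]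
  _ = x * y⁻¹ * z⁻¹ := by rw [← h2]
  _ = x * (y⁻¹ * z⁻¹) := by rw [mul_assoc]

lemma hei_one_zpow (hxz : Commute x z) (h : y * x = x * (y * z)) (a : ℤ) :
    y * x ^ a = x ^ a * (y * z ^ a) := by
  induction a using Int.induction_on with
  | zero => simp
  | succ a ih =>
    have hxa : x ^ ((a : ℤ) + 1) = x ^ (a : ℤ) * x := zpow_add_one x a
    have hza : z ^ ((a : ℤ) + 1) = z * z ^ (a : ℤ) := by
      rw [← zpow_one_add, add_comm]
    calc y * x ^ ((a : ℤ) + 1) = (y * x ^ (a : ℤ)) * x := by rw [hxa, mul_assoc]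
    _ = (x ^ (a : ℤ) * (y * z ^ (a : ℤ))) * x := by rw [ih]
    _ = x ^ (a : ℤ) * (y * (z ^ (a : ℤ) * x)) := by simp [mul_assoc]
    _ = x ^ (a : ℤ) * (y * (x * z ^ (a : ℤ))) := by rw [((hxz.zpow_right a).symm.eq :
          z ^ (a : ℤ) * x = x * z ^ (a : ℤ))]
    _ = x ^ (a : ℤ) * ((y * x) * z ^ (a : ℤ)) := by simp [mul_assoc]
    _ = x ^ (a : ℤ) * ((x * (y * z)) * z ^ (a : ℤ)) := by rw [h]
    _ = x ^ ((a : ℤ) + 1) * (y * z ^ ((a : ℤ) + 1)) := by rw [hxa, hza]; simp [mul_assoc]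
  | pred a ih =>
    have hxa : x ^ (-(a : ℤ) - 1) = x ^ (-(a : ℤ)) * x⁻¹ := zpow_sub_one x (-a)
    have hza : z ^ (-(a : ℤ) - 1) = z⁻¹ * z ^ (-(a : ℤ)) := by
      rw [sub_eq_add_neg, add_comm, zpow_add, zpow_neg_one]
    calc y * x ^ (-(a : ℤ) - 1) = (y * x ^ (-(a : ℤ))) * x⁻¹ := by rw [hxa, mul_assoc]
    _ = (x ^ (-(a : ℤ)) * (y * z ^ (-(a : ℤ)))) * x⁻¹ := by rw [ih]
    _ = x ^ (-(a : ℤ)) * (y * (z ^ (-(a : ℤ)) * x⁻¹)) := by simp [mul_assoc]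
    _ = x ^ (-(a : ℤ)) * (y * (x⁻¹ * z ^ (-(a : ℤ)))) := by
        rw [((hxz.symm.inv_right.zpow_left (-a)).eq :
          z ^ (-(a:ℤ)) * x⁻¹ = x⁻¹ * z ^ (-(a:ℤ)))]
    _ = x ^ (-(a : ℤ)) * ((y * x⁻¹) * z ^ (-(a : ℤ))) := by simp [mul_assoc]
    _ = x ^ (-(a : ℤ)) * ((x⁻¹ * (y * z⁻¹)) * z ^ (-(a : ℤ))) := by rw [hei_inv_x hxz h]
    _ = x ^ (-(a : ℤ) - 1) * (y * z ^ (-(a : ℤ) - 1)) := by rw [hxa, hza]; simp [mul_assoc]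

lemma hei_pow_one (hyz : Commute y z) (h : y * x = x * (y * z)) (b : ℤ) :
    y ^ b * x = x * (y ^ b * z ^ b) := by
  induction b using Int.induction_on with
  | zero => simp
  | succ b ih =>
    have hyb : y ^ ((b : ℤ) + 1) = y * y ^ (b : ℤ) := by rw [← zpow_one_add, add_comm]
    have hzb : z ^ ((b : ℤ) + 1) = z * z ^ (b : ℤ) := by rw [← zpow_one_add, add_comm]
    have hs : z * (y ^ (b : ℤ) * z ^ (b : ℤ)) = y ^ (b : ℤ) * (z * z ^ (b : ℤ)) := by
      rw [← mul_assoc, ((hyz.zpow_left b).symm.eq : z * y ^ (b:ℤ) = y ^ (b:ℤ) * z), mul_assoc]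
    calc y ^ ((b : ℤ) + 1) * x = y * (y ^ (b : ℤ) * x) := by rw [hyb, mul_assoc]
    _ = y * (x * (y ^ (b : ℤ) * z ^ (b : ℤ))) := by rw [ih]
    _ = (y * x) * (y ^ (b : ℤ) * z ^ (b : ℤ)) := by rw [mul_assoc]
    _ = (x * (y * z)) * (y ^ (b : ℤ) * z ^ (b : ℤ)) := by rw [h]
    _ = x * (y * (z * (y ^ (b : ℤ) * z ^ (b : ℤ)))) := by simp [mul_assoc]
    _ = x * (y * (y ^ (b : ℤ) * (z * z ^ (b : ℤ)))) := by rw [hs]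
    _ = x * (y ^ ((b : ℤ) + 1) * z ^ ((b : ℤ) + 1)) := by rw [hyb, hzb, mul_assoc]
  | pred b ih =>
    have hyb : y ^ (-(b : ℤ) - 1) = y⁻¹ * y ^ (-(b : ℤ)) := by
      rw [sub_eq_add_neg, add_comm, zpow_add, zpow_neg_one]
    have hzb : z ^ (-(b : ℤ) - 1) = z⁻¹ * z ^ (-(b : ℤ)) := by
      rw [sub_eq_add_neg, add_comm, zpow_add, zpow_neg_one]
    have hs : z⁻¹ * (y ^ (-(b : ℤ)) * z ^ (-(b : ℤ))) =
        y ^ (-(b : ℤ)) * (z⁻¹ * z ^ (-(b : ℤ))) := by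
      rw [← mul_assoc, ((hyz.zpow_left (-b)).inv_right.symm.eq :
        z⁻¹ * y ^ (-(b:ℤ)) = y ^ (-(b:ℤ)) * z⁻¹), mul_assoc]
    calc y ^ (-(b : ℤ) - 1) * x = y⁻¹ * (y ^ (-(b : ℤ)) * x) := by rw [hyb, mul_assoc]
    _ = y⁻¹ * (x * (y ^ (-(b : ℤ)) * z ^ (-(b : ℤ)))) := by rw [ih]
    _ = (y⁻¹ * x) * (y ^ (-(b : ℤ)) * z ^ (-(b : ℤ))) := by rw [mul_assoc]
    _ = (x * (y⁻¹ * z⁻¹)) * (y ^ (-(b : ℤ)) * z ^ (-(b : ℤ))) := by rw [hei_inv_y hyz h]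
    _ = x * (y⁻¹ * (z⁻¹ * (y ^ (-(b : ℤ)) * z ^ (-(b : ℤ))))) := by simp [mul_assoc]
    _ = x * (y⁻¹ * (y ^ (-(b : ℤ)) * (z⁻¹ * z ^ (-(b : ℤ))))) := by rw [hs]
    _ = x * (y ^ (-(b : ℤ) - 1) * z ^ (-(b : ℤ) - 1)) := by rw [hyb, hzb, mul_assoc]

lemma hei_zpow_zpow (hxz : Commute x z) (hyz : Commute y z) (h : y * x = x * (y * z))
    (a b : ℤ) : y ^ b * x ^ a = x ^ a * (y ^ b * z ^ (a * b)) := by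
  have h1 : y * x ^ a = x ^ a * (y * z ^ a) := hei_one_zpow hxz h a
  have h2 := hei_pow_one (hyz.zpow_right a) h1 b
  rwa [← zpow_mul] at h2
end Hei

namespace H5aux

def X : H5 := PresentedGroup.of 0
def Y : H5 := PresentedGroup.of 1
def U : H5 := PresentedGroup.of 2
def V : H5 := PresentedGroup.of 3
def Z : H5 := PresentedGroup.of 4

lemma rel_one {r : FreeGroup (Fin 5)} (hr : r ∈ h5Rels) :
    PresentedGroup.mk h5Rels r = 1 :=
  (QuotientGroup.eq_one_iff _).mpr (Subgroup.subset_normalClosure hr)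

lemma mem1 : ⁅FreeGroup.of (0 : Fin 5), FreeGroup.of 1⁆ * (FreeGroup.of 4)⁻¹ ∈ h5Rels := by
  simp [h5Rels]
lemma mem2 : ⁅FreeGroup.of (2 : Fin 5), FreeGroup.of 3⁆ * (FreeGroup.of 4)⁻¹ ∈ h5Rels := by
  simp [h5Rels]
lemma mem3 : ⁅FreeGroup.of (0 : Fin 5), FreeGroup.of 2⁆ ∈ h5Rels := by simp [h5Rels]
lemma mem4 : ⁅FreeGroup.of (0 : Fin 5), FreeGroup.of 3⁆ ∈ h5Rels := by simp [h5Rels]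
lemma mem5 : ⁅FreeGroup.of (1 : Fin 5), FreeGroup.of 2⁆ ∈ h5Rels := by simp [h5Rels]
lemma mem6 : ⁅FreeGroup.of (1 : Fin 5), FreeGroup.of 3⁆ ∈ h5Rels := by simp [h5Rels]
lemma mem7 : ⁅FreeGroup.of (0 : Fin 5), FreeGroup.of 4⁆ ∈ h5Rels := by simp [h5Rels]
lemma mem8 : ⁅FreeGroup.of (1 : Fin 5), FreeGroup.of 4⁆ ∈ h5Rels := by simp [h5Rels]
lemma mem9 : ⁅FreeGroup.of (2 : Fin 5), FreeGroup.of 4⁆ ∈ h5Rels := by simp [h5Rels]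
lemma mem10 : ⁅FreeGroup.of (3 : Fin 5), FreeGroup.of 4⁆ ∈ h5Rels := by simp [h5Rels]

lemma mk_commutator (i j : Fin 5) :
    PresentedGroup.mk h5Rels ⁅FreeGroup.of i, FreeGroup.of j⁆ =
      ⁅PresentedGroup.of (rels := h5Rels) i, PresentedGroup.of (rels := h5Rels) j⁆ := by
  rw [map_commutatorElement]; rfl

lemma comm_of_rel {i j : Fin 5} (hr : ⁅FreeGroup.of i, FreeGroup.of j⁆ ∈ h5Rels) :
    Commute (PresentedGroup.of (rels := h5Rels) i) (PresentedGroup.of (rels := h5Rels) j) :=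
  commutatorElement_eq_one_iff_commute.mp (by rw [← mk_commutator]; exact rel_one hr)

lemma cXU : Commute X U := comm_of_rel mem3
lemma cXV : Commute X V := comm_of_rel mem4
lemma cYU : Commute Y U := comm_of_rel mem5
lemma cYV : Commute Y V := comm_of_rel mem6
lemma cXZ : Commute X Z := comm_of_rel mem7
lemma cYZ : Commute Y Z := comm_of_rel mem8
lemma cUZ : Commute U Z := comm_of_rel mem9
lemma cVZ : Commute V Z := comm_of_rel mem10

lemma commXY : ⁅X, Y⁆ = Z := by
  have h := rel_one mem1
  rw [map_mul, map_inv, mk_commutator] at h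
  exact mul_inv_eq_one.mp h

lemma commUV : ⁅U, V⁆ = Z := by
  have h := rel_one mem2
  rw [map_mul, map_inv, mk_commutator] at h
  exact mul_inv_eq_one.mp h

lemma hYX : Y * X = X * (Y * Z⁻¹) := by
  have h1 : X * Y = Z * (Y * X) := by rw [← commXY]; group
  have h2 : Y * X = Z⁻¹ * (X * Y) := by rw [h1]; group
  rw [h2, ← mul_assoc, (cXZ.inv_right.symm.eq : Z⁻¹ * X = X * Z⁻¹), mul_assoc,
      (cYZ.inv_right.symm.eq : Z⁻¹ * Y = Y * Z⁻¹)]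

lemma hVU : V * U = U * (V * Z⁻¹) := by
  have h1 : U * V = Z * (V * U) := by rw [← commUV]; group
  have h2 : V * U = Z⁻¹ * (U * V) := by rw [h1]; group
  rw [h2, ← mul_assoc, (cUZ.inv_right.symm.eq : Z⁻¹ * U = U * Z⁻¹), mul_assoc,
      (cVZ.inv_right.symm.eq : Z⁻¹ * V = V * Z⁻¹)]

lemma hZcen (g : H5) : Commute Z g := by
  have hg : g ∈ Subgroup.centralizer {Z} := by
    apply PresentedGroup.generated_by
    intro j
    rw [Subgroup.mem_centralizer_iff]
    intro h hh
    rw [Set.mem_singleton_iff] at hh; subst hh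
    fin_cases j
    · exact cXZ.symm.eq
    · exact cYZ.symm.eq
    · exact cUZ.symm.eq
    · exact cVZ.symm.eq
    · rfl
  exact Subgroup.mem_centralizer_iff.mp hg Z (Set.mem_singleton Z)

lemma zpow_central (e : ℤ) (g : H5) : Commute (Z ^ e) g := (hZcen g).zpow_left e

lemma tailswap {p q r : H5} (hpq : p * q = q * r) (w : H5) :
    p * (q * w) = q * (r * w) := by rw [← mul_assoc, hpq, mul_assoc]

lemma sYXn (a b : ℤ) : Y ^ b * X ^ a = X ^ a * (Y ^ b * Z ^ (-(a * b))) := by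
  have h := hei_zpow_zpow (x := X) (y := Y) (z := Z⁻¹) cXZ.inv_right cYZ.inv_right hYX a b
  rwa [inv_zpow, ← zpow_neg] at h

lemma sVUn (c d : ℤ) : V ^ d * U ^ c = U ^ c * (V ^ d * Z ^ (-(c * d))) := by
  have h := hei_zpow_zpow (x := U) (y := V) (z := Z⁻¹) cUZ.inv_right cVZ.inv_right hVU c d
  rwa [inv_zpow, ← zpow_neg] at h

lemma sYX (a b : ℤ) (w : H5) :
    Y ^ b * (X ^ a * w) = X ^ a * (Y ^ b * (Z ^ (-(a * b)) * w)) := by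
  rw [tailswap (sYXn a b) w, mul_assoc]

lemma sVU (c d : ℤ) (w : H5) :
    V ^ d * (U ^ c * w) = U ^ c * (V ^ d * (Z ^ (-(c * d)) * w)) := by
  rw [tailswap (sVUn c d) w, mul_assoc]

lemma sUXn (a c : ℤ) : U ^ c * X ^ a = X ^ a * U ^ c := ((cXU.zpow_zpow a c).symm).eq
lemma sVXn (a d : ℤ) : V ^ d * X ^ a = X ^ a * V ^ d := ((cXV.zpow_zpow a d).symm).eq
lemma sUYn (b c : ℤ) : U ^ c * Y ^ b = Y ^ b * U ^ c := ((cYU.zpow_zpow b c).symm).eq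
lemma sVYn (b d : ℤ) : V ^ d * Y ^ b = Y ^ b * V ^ d := ((cYV.zpow_zpow b d).symm).eq
lemma sUX (a c : ℤ) (w : H5) : U ^ c * (X ^ a * w) = X ^ a * (U ^ c * w) :=
  tailswap (sUXn a c) w
lemma sVX (a d : ℤ) (w : H5) : V ^ d * (X ^ a * w) = X ^ a * (V ^ d * w) :=
  tailswap (sVXn a d) w
lemma sUY (b c : ℤ) (w : H5) : U ^ c * (Y ^ b * w) = Y ^ b * (U ^ c * w) :=
  tailswap (sUYn b c) w
lemma sVY (b d : ℤ) (w : H5) : V ^ d * (Y ^ b * w) = Y ^ b * (V ^ d * w) :=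
  tailswap (sVYn b d) w

lemma sZXn (a e : ℤ) : Z ^ e * X ^ a = X ^ a * Z ^ e := (zpow_central e (X ^ a)).eq
lemma sZYn (b e : ℤ) : Z ^ e * Y ^ b = Y ^ b * Z ^ e := (zpow_central e (Y ^ b)).eq
lemma sZUn (c e : ℤ) : Z ^ e * U ^ c = U ^ c * Z ^ e := (zpow_central e (U ^ c)).eq
lemma sZVn (d e : ℤ) : Z ^ e * V ^ d = V ^ d * Z ^ e := (zpow_central e (V ^ d)).eq
lemma sZX (a e : ℤ) (w : H5) : Z ^ e * (X ^ a * w) = X ^ a * (Z ^ e * w) :=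
  tailswap (sZXn a e) w
lemma sZY (b e : ℤ) (w : H5) : Z ^ e * (Y ^ b * w) = Y ^ b * (Z ^ e * w) :=
  tailswap (sZYn b e) w
lemma sZU (c e : ℤ) (w : H5) : Z ^ e * (U ^ c * w) = U ^ c * (Z ^ e * w) :=
  tailswap (sZUn c e) w
lemma sZV (d e : ℤ) (w : H5) : Z ^ e * (V ^ d * w) = V ^ d * (Z ^ e * w) :=
  tailswap (sZVn d e) w

lemma mXn (a a' : ℤ) : X ^ a * X ^ a' = X ^ (a + a') := (zpow_add X a a').symm
lemma mYn (b b' : ℤ) : Y ^ b * Y ^ b' = Y ^ (b + b') := (zpow_add Y b b').symm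
lemma mUn (c c' : ℤ) : U ^ c * U ^ c' = U ^ (c + c') := (zpow_add U c c').symm
lemma mVn (d d' : ℤ) : V ^ d * V ^ d' = V ^ (d + d') := (zpow_add V d d').symm
lemma mZn (e e' : ℤ) : Z ^ e * Z ^ e' = Z ^ (e + e') := (zpow_add Z e e').symm
lemma mX (a a' : ℤ) (w : H5) : X ^ a * (X ^ a' * w) = X ^ (a + a') * w := by
  rw [← mul_assoc, mXn]
lemma mY (b b' : ℤ) (w : H5) : Y ^ b * (Y ^ b' * w) = Y ^ (b + b') * w := by
  rw [← mul_assoc, mYn]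
lemma mU (c c' : ℤ) (w : H5) : U ^ c * (U ^ c' * w) = U ^ (c + c') * w := by
  rw [← mul_assoc, mUn]
lemma mV (d d' : ℤ) (w : H5) : V ^ d * (V ^ d' * w) = V ^ (d + d') * w := by
  rw [← mul_assoc, mVn]
lemma mZ (e e' : ℤ) (w : H5) : Z ^ e * (Z ^ e' * w) = Z ^ (e + e') * w := by
  rw [← mul_assoc, mZn]

def NF (a b c d e : ℤ) : H5 := X ^ a * (Y ^ b * (U ^ c * (V ^ d * Z ^ e)))

lemma mulNF (a b c d e a' b' c' d' e' : ℤ) :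
    NF a b c d e * NF a' b' c' d' e' =
      NF (a + a') (b + b') (c + c') (d + d') (e + e' - a' * b - c' * d) := by
  simp only [NF, mul_assoc]
  simp only [sZX, sZY, sZU, sZV, sZXn, sZYn, sZUn, sZVn, sYX, sYXn, sVU, sVUn,
    sUX, sUXn, sVX, sVXn, sUY, sUYn, sVY, sVYn,
    mX, mY, mU, mV, mZ, mXn, mYn, mUn, mVn, mZn]
  have h : -(a' * b) + (-(c' * d) + (e + e')) = e + e' - a' * b - c' * d := by ring
  rw [h]

def fgen : Fin 5 → Md :=
  ![⟨1,0,0,0,0⟩, ⟨0,1,0,0,0⟩, ⟨0,0,1,0,0⟩, ⟨0,0,0,1,0⟩, ⟨0,0,0,0,1⟩]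

lemma frels : ∀ r ∈ h5Rels, FreeGroup.lift fgen r = 1 := by
  intro r hr
  simp only [h5Rels, Set.mem_insert_iff, Set.mem_singleton_iff] at hr
  rcases hr with rfl|rfl|rfl|rfl|rfl|rfl|rfl|rfl|rfl|rfl <;>
    · simp only [commutatorElement_def, map_mul, map_inv, FreeGroup.lift_apply_of]
      ext <;> simp [fgen]

def phi : H5 →* Md := PresentedGroup.toGroup frels

lemma phiX : phi X = ⟨1,0,0,0,0⟩ := PresentedGroup.toGroup.of frels
lemma phiY : phi Y = ⟨0,1,0,0,0⟩ := PresentedGroup.toGroup.of frels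
lemma phiU : phi U = ⟨0,0,1,0,0⟩ := PresentedGroup.toGroup.of frels
lemma phiV : phi V = ⟨0,0,0,1,0⟩ := PresentedGroup.toGroup.of frels
lemma phiZ : phi Z = ⟨0,0,0,0,1⟩ := PresentedGroup.toGroup.of frels

lemma phiNF (a b c d e : ℤ) : phi (NF a b c d e) = ⟨a,b,c,d,e⟩ := by
  simp only [NF, map_mul, map_zpow, phiX, phiY, phiU, phiV, phiZ,
    Md.e1_zpow, Md.e2_zpow, Md.e3_zpow, Md.e4_zpow, Md.e5_zpow]
  ext <;> simp

def psi : Md →* H5 :=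
  MonoidHom.mk' (fun m => NF m.a m.b m.c m.d m.e) (fun m m' => by simp [mulNF])

lemma psi_phi (g : H5) : psi (phi g) = g := by
  have h : psi.comp phi = MonoidHom.id H5 := by
    apply PresentedGroup.ext
    intro i
    fin_cases i <;>
      simp [phi, psi, PresentedGroup.toGroup.of, fgen, NF, X, Y, U, V, Z]
  exact DFunLike.congr_fun h g

lemma phi_psi (m : Md) : phi (psi m) = m := by
  show phi (NF m.a m.b m.c m.d m.e) = m
  rw [phiNF]

def iso : H5 ≃* Md :=
  { toFun := phi, invFun := psi, left_inv := psi_phi, right_inv := phi_psi,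
    map_mul' := map_mul phi }

end H5aux
section FinalAux

lemma exists_zpow_mem {G : Type*} [Group G] (H : Subgroup G) [hFI : H.FiniteIndex] (g : G) :
    ∃ n : ℤ, n ≠ 0 ∧ g ^ n ∈ H := by
  obtain ⟨n, hn, _, hmem⟩ := Subgroup.exists_pow_mem_of_index_ne_zero hFI.index_ne_zero g
  exact ⟨(n : ℤ), by exact_mod_cast hn.ne', by rw [zpow_natCast]; exact hmem⟩

lemma exists_central {G : Type*} [Group G] [Nontrivial G]
    (h2 : ∀ g h k : G, ⁅⁅g, h⁆, k⁆ = 1) :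
    ∃ α : G, α ≠ 1 ∧ ∀ g, Commute α g := by
  by_cases hab : ∀ a b : G, Commute a b
  · obtain ⟨α, hα⟩ := exists_ne (1 : G)
    exact ⟨α, hα, fun g => hab α g⟩
  · push_neg at hab
    obtain ⟨a, b, hab⟩ := hab
    refine ⟨⁅a, b⁆, ?_, fun g => commutatorElement_eq_one_iff_commute.mp (h2 a b g)⟩
    intro h1
    exact hab (commutatorElement_eq_one_iff_commute.mp h1)

end FinalAux

namespace H5aux

lemma isoX : iso X = (⟨1,0,0,0,0⟩ : Md) := phiX
lemma isoY : iso Y = (⟨0,1,0,0,0⟩ : Md) := phiY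
lemma isoU : iso U = (⟨0,0,1,0,0⟩ : Md) := phiU
lemma isoV : iso V = (⟨0,0,0,1,0⟩ : Md) := phiV

lemma h5_class_two (g h k : H5) : ⁅⁅g, h⁆, k⁆ = 1 := by
  apply iso.injective
  rw [map_commutatorElement, map_commutatorElement, map_one]
  exact Md.class_two _ _ _

lemma h5_torsionfree {g : H5} {n : ℤ} (hn : n ≠ 0) (h : g ^ n = 1) : g = 1 := by
  apply iso.injective
  rw [map_one]
  exact Md.torsionfree hn (by rw [← map_zpow, h, map_one])

lemma coord_zero {k w : ℤ} (hk : k ≠ 0) (h : k * w = 0) : w = 0 := by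
  rcases mul_eq_zero.mp h with h' | h'
  · exact absurd h' hk
  · exact h'

lemma central_coords {H : Subgroup H5} [H.FiniteIndex] {g : H5}
    (hg : ∀ m ∈ H, Commute g m) : ∃ t : ℤ, iso g = ⟨0, 0, 0, 0, t⟩ := by
  obtain ⟨k1, hk1, hx⟩ := exists_zpow_mem H (X ^ 1)
  obtain ⟨k2, hk2, hy⟩ := exists_zpow_mem H (Y ^ 1)
  obtain ⟨k3, hk3, hu⟩ := exists_zpow_mem H (U ^ 1)
  obtain ⟨k4, hk4, hv⟩ := exists_zpow_mem H (V ^ 1)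
  have d1 : iso g * (⟨1,0,0,0,0⟩ : Md) ^ k1 = (⟨1,0,0,0,0⟩ : Md) ^ k1 * iso g := by
    have h0 := congrArg iso (hg _ hx).eq
    simpa [map_mul, map_zpow, isoX] using h0
  have d2 : iso g * (⟨0,1,0,0,0⟩ : Md) ^ k2 = (⟨0,1,0,0,0⟩ : Md) ^ k2 * iso g := by
    have h0 := congrArg iso (hg _ hy).eq
    simpa [map_mul, map_zpow, isoY] using h0
  have d3 : iso g * (⟨0,0,1,0,0⟩ : Md) ^ k3 = (⟨0,0,1,0,0⟩ : Md) ^ k3 * iso g := by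
    have h0 := congrArg iso (hg _ hu).eq
    simpa [map_mul, map_zpow, isoU] using h0
  have d4 : iso g * (⟨0,0,0,1,0⟩ : Md) ^ k4 = (⟨0,0,0,1,0⟩ : Md) ^ k4 * iso g := by
    have h0 := congrArg iso (hg _ hv).eq
    simpa [map_mul, map_zpow, isoV] using h0
  rw [Md.e1_zpow] at d1
  rw [Md.e2_zpow] at d2
  rw [Md.e3_zpow] at d3
  rw [Md.e4_zpow] at d4
  have hb : (iso g).b = 0 := by
    have e1 := congrArg Md.e d1
    simp at e1
    first
    | exact e1.resolve_left hk1
    | exact coord_zero hk1 (by linarith)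
  have ha : (iso g).a = 0 := by
    have e2 := congrArg Md.e d2
    simp at e2
    first
    | exact e2.resolve_left hk2
    | exact coord_zero hk2 (by linarith)
  have hd : (iso g).d = 0 := by
    have e3 := congrArg Md.e d3
    simp at e3
    first
    | exact e3.resolve_left hk3
    | exact coord_zero hk3 (by linarith)
  have hc : (iso g).c = 0 := by
    have e4 := congrArg Md.e d4
    simp at e4
    first
    | exact e4.resolve_left hk4
    | exact coord_zero hk4 (by linarith)
  exact ⟨(iso g).e, by ext <;> simp [ha, hb, hc, hd]⟩

end H5aux

/-- `H₅` is irreducible: no finite index subgroup of `H₅` is isomorphic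
to a direct product of two nontrivial groups. -/
theorem stmt15 :
    ¬ ∃ H : Subgroup H5, H.FiniteIndex ∧
      ∃ A B : Subgroup ↥H, Nontrivial ↥A ∧ Nontrivial ↥B ∧
        Nonempty (↥H ≃* ↥A × ↥B) := by
  open H5aux in
  rintro ⟨H, hFI, A, B, hA, hB, ⟨eqv⟩⟩
  haveI := hFI
  haveI := hA
  haveI := hB
  have jAinj : Function.Injective (H.subtype.comp A.subtype) :=
    H.subtype_injective.comp A.subtype_injective
  have jBinj : Function.Injective (H.subtype.comp B.subtype) :=
    H.subtype_injective.comp B.subtype_injective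
  have h2A : ∀ g h k : ↥A, ⁅⁅g, h⁆, k⁆ = 1 := by
    intro g h k
    apply jAinj
    rw [map_commutatorElement, map_commutatorElement, map_one]
    exact h5_class_two _ _ _
  have h2B : ∀ g h k : ↥B, ⁅⁅g, h⁆, k⁆ = 1 := by
    intro g h k
    apply jBinj
    rw [map_commutatorElement, map_commutatorElement, map_one]
    exact h5_class_two _ _ _
  obtain ⟨α, hα1, hαc⟩ := exists_central h2A
  obtain ⟨β, hβ1, hβc⟩ := exists_central h2B
  set gg : ↥H := eqv.symm (α, 1) with hggdef
  set hh : ↥H := eqv.symm (1, β) with hhhdef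
  have hggc : ∀ x : ↥H, Commute gg x := by
    intro x
    have h1 : Commute ((α, 1) : ↥A × ↥B) (eqv x) := by
      show ((α, 1) : ↥A × ↥B) * eqv x = eqv x * (α, 1)
      exact Prod.ext (by simpa using (hαc (eqv x).1).eq) (by simp)
    have h2 := h1.map eqv.symm.toMonoidHom
    simpa using h2
  have hhhc : ∀ x : ↥H, Commute hh x := by
    intro x
    have h1 : Commute ((1, β) : ↥A × ↥B) (eqv x) := by
      show ((1, β) : ↥A × ↥B) * eqv x = eqv x * (1, β)
      exact Prod.ext (by simp) (by simpa using (hβc (eqv x).2).eq)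
    have h2 := h1.map eqv.symm.toMonoidHom
    simpa using h2
  have hggc5 : ∀ m ∈ H, Commute (↑gg : H5) m := by
    intro m hm
    have h3 := congrArg (fun t : ↥H => (t : H5)) (hggc ⟨m, hm⟩).eq
    exact (by simpa using h3 : (↑gg : H5) * m = m * ↑gg)
  have hhhc5 : ∀ m ∈ H, Commute (↑hh : H5) m := by
    intro m hm
    have h3 := congrArg (fun t : ↥H => (t : H5)) (hhhc ⟨m, hm⟩).eq
    exact (by simpa using h3 : (↑hh : H5) * m = m * ↑hh)
  obtain ⟨s, hgs⟩ := central_coords hggc5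
  obtain ⟨t, hht⟩ := central_coords hhhc5
  have hpow : (↑gg : H5) ^ t = (↑hh : H5) ^ s := by
    apply iso.injective
    rw [map_zpow, map_zpow, hgs, hht, Md.central_zpow, Md.central_zpow]
    ext <;> simp [mul_comm]
  have hpowH : gg ^ t = hh ^ s :=
    Subtype.ext (by simpa [SubgroupClass.coe_zpow] using hpow)
  have he := congrArg eqv hpowH
  rw [map_zpow, map_zpow, hggdef, hhhdef, eqv.apply_symm_apply, eqv.apply_symm_apply] at he
  have hαt : α ^ t = 1 := by
    have h5 := congrArg Prod.fst he
    simpa using h5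
  by_cases ht0 : t = 0
  · have hhh1 : (↑hh : H5) = 1 := by
      apply iso.injective
      rw [hht, ht0, map_one]
      rfl
    have hhhH : hh = 1 := Subtype.ext hhh1
    have h4 := congrArg eqv hhhH
    rw [hhhdef, eqv.apply_symm_apply, map_one] at h4
    exact hβ1 (by simpa using congrArg Prod.snd h4)
  · have hαH5 : ((α : ↥H) : H5) ^ t = 1 := by
      have h6 := congrArg (fun u : ↥A => ((u : ↥H) : H5)) hαt
      simpa [SubgroupClass.coe_zpow] using h6
    have h7 := h5_torsionfree ht0 hαH5
    exact hα1 (Subtype.ext (Subtype.ext h7))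
end

section
/- The fundamental group of a nontrivial circle bundle over the 2-torus, G_n = ⟨x, y, z | [x,y] = zⁿ, xz = zx, yz = zy⟩ with n ≥ 1, is not IIPP: there do not exist element-wise commuting subgroups Γ₁, Γ₂ ⊆ G_n, both of infinite index in G_n, such that Γ₁Γ₂ has finite index in G_n. -/
open scoped commutatorElement

/-- The relators of `G_n = ⟨x, y, z | [x,y] = zⁿ, xz = zx, yz = zy⟩`. -/
def gnRels (n : ℕ) : Set (FreeGroup (Fin 3)) :=
  let x : FreeGroup (Fin 3) := FreeGroup.of 0
  let y : FreeGroup (Fin 3) := FreeGroup.of 1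
  let z : FreeGroup (Fin 3) := FreeGroup.of 2
  { ⁅x, y⁆ * (z ^ n)⁻¹, ⁅x, z⁆, ⁅y, z⁆ }

/-- The fundamental group `G_n` of a circle bundle over the 2-torus with Euler
number `n`. -/
abbrev Gn (n : ℕ) := PresentedGroup (gnRels n)

@[ext]
structure Hsb (n : ℕ) where
  a : ℤ
  b : ℤ
  c : ℤ

namespace Hsb
variable {n : ℕ}

instance : Mul (Hsb n) := ⟨fun g h => ⟨g.a + h.a, g.b + h.b, g.c + h.c - n * h.a * g.b⟩⟩
instance : One (Hsb n) := ⟨⟨0, 0, 0⟩⟩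
instance : Inv (Hsb n) := ⟨fun g => ⟨-g.a, -g.b, -g.c - n * g.a * g.b⟩⟩

@[simp] lemma mul_a (g h : Hsb n) : (g * h).a = g.a + h.a := rfl
@[simp] lemma mul_b (g h : Hsb n) : (g * h).b = g.b + h.b := rfl
@[simp] lemma mul_c (g h : Hsb n) : (g * h).c = g.c + h.c - n * h.a * g.b := rfl
@[simp] lemma one_a : (1 : Hsb n).a = 0 := rfl
@[simp] lemma one_b : (1 : Hsb n).b = 0 := rfl
@[simp] lemma one_c : (1 : Hsb n).c = 0 := rfl
@[simp] lemma inv_a (g : Hsb n) : g⁻¹.a = -g.a := rfl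
@[simp] lemma inv_b (g : Hsb n) : g⁻¹.b = -g.b := rfl
@[simp] lemma inv_c (g : Hsb n) : g⁻¹.c = -g.c - n * g.a * g.b := rfl

instance : Group (Hsb n) where
  mul_assoc g h k := by ext <;> simp <;> ring
  one_mul g := by ext <;> simp
  mul_one g := by ext <;> simp
  inv_mul_cancel g := by ext <;> simp <;> ring

end Hsb

section CommAux
variable {G : Type*} [Group G] {x y z : G}

lemma aux_one (hzx : Commute z x) (hzy : Commute z y) (h : y * x = x * y * z) :
    ∀ a : ℤ, y * x ^ a = x ^ a * y * z ^ a := by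
  have e2 : x * y * x⁻¹ = y * z⁻¹ := by
    have hc := hzx.inv_left.eq
    calc x * y * x⁻¹ = (x * y * z) * (z⁻¹ * x⁻¹) := by group
    _ = (y * x) * (z⁻¹ * x⁻¹) := by rw [h]
    _ = y * (x * z⁻¹) * x⁻¹ := by group
    _ = y * (z⁻¹ * x) * x⁻¹ := by rw [← hc]
    _ = y * z⁻¹ := by group
  have hinv : y * x⁻¹ = x⁻¹ * y * z⁻¹ := by
    calc y * x⁻¹ = x⁻¹ * (x * y * x⁻¹) := by group
    _ = x⁻¹ * (y * z⁻¹) := by rw [e2]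
    _ = x⁻¹ * y * z⁻¹ := by group
  intro a
  induction a using Int.induction_on with
  | zero => simp
  | succ k ih =>
    have hc : Commute (z ^ (k : ℤ)) x := hzx.zpow_left _
    calc y * x ^ ((k : ℤ) + 1) = (y * x ^ (k : ℤ)) * x := by rw [zpow_add_one, mul_assoc]
    _ = x ^ (k : ℤ) * y * (z ^ (k : ℤ) * x) := by rw [ih]; group
    _ = x ^ (k : ℤ) * (y * x) * z ^ (k : ℤ) := by rw [hc.eq]; group
    _ = x ^ (k : ℤ) * (x * y * z) * z ^ (k : ℤ) := by rw [h]
    _ = x ^ (k : ℤ) * x * y * (z * z ^ (k : ℤ)) := by group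
    _ = x ^ (k : ℤ) * x * y * (z ^ (k : ℤ) * z) := by
        rw [((Commute.refl z).zpow_right (k : ℤ)).eq]
    _ = x ^ ((k : ℤ) + 1) * y * z ^ ((k : ℤ) + 1) := by simp only [zpow_add_one, mul_assoc]
  | pred k ih =>
    have hc : Commute (z ^ (-k : ℤ)) x⁻¹ := (hzx.zpow_left _).inv_right
    calc y * x ^ (-(k : ℤ) - 1) = (y * x ^ (-k : ℤ)) * x⁻¹ := by rw [zpow_sub_one]; group
    _ = x ^ (-k : ℤ) * y * (z ^ (-k : ℤ) * x⁻¹) := by rw [ih]; group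
    _ = x ^ (-k : ℤ) * y * (x⁻¹ * z ^ (-k : ℤ)) := by rw [hc.eq]
    _ = x ^ (-k : ℤ) * (y * x⁻¹) * z ^ (-k : ℤ) := by group
    _ = x ^ (-k : ℤ) * (x⁻¹ * y * z⁻¹) * z ^ (-k : ℤ) := by rw [hinv]
    _ = x ^ (-(k : ℤ) - 1) * y * (z⁻¹ * z ^ (-k : ℤ)) := by rw [zpow_sub_one]; group
    _ = x ^ (-(k : ℤ) - 1) * y * z ^ (-(k : ℤ) - 1) := by group

lemma aux_two (hzx : Commute z x) (hzy : Commute z y) (h : y * x = x * y * z) :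
    ∀ a b : ℤ, y ^ b * x ^ a = x ^ a * y ^ b * z ^ (a * b) := by
  intro a b
  have h1 := aux_one hzx hzy h
  have hinv : y⁻¹ * x ^ a = x ^ a * y⁻¹ * z ^ (-a) := by
    calc y⁻¹ * x ^ a = y⁻¹ * (x ^ a * y * z ^ a) * (z ^ a)⁻¹ * y⁻¹ := by group
    _ = y⁻¹ * (y * x ^ a) * (z ^ a)⁻¹ * y⁻¹ := by rw [← h1 a]
    _ = x ^ a * ((z ^ a)⁻¹ * y⁻¹) := by group
    _ = x ^ a * (y⁻¹ * (z ^ a)⁻¹) := by rw [((hzy.zpow_left a).inv_left.inv_right).eq]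
    _ = x ^ a * y⁻¹ * z ^ (-a) := by group
  induction b using Int.induction_on with
  | zero => simp
  | succ k ih =>
    calc y ^ ((k : ℤ) + 1) * x ^ a = y ^ (k : ℤ) * (y * x ^ a) := by rw [zpow_add_one]; group
    _ = y ^ (k : ℤ) * (x ^ a * y * z ^ a) := by rw [h1 a]
    _ = (y ^ (k : ℤ) * x ^ a) * y * z ^ a := by group
    _ = (x ^ a * y ^ (k : ℤ) * z ^ (a * k)) * y * z ^ a := by rw [ih]
    _ = x ^ a * y ^ (k : ℤ) * (z ^ (a * k) * y) * z ^ a := by group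
    _ = x ^ a * y ^ (k : ℤ) * (y * z ^ (a * k)) * z ^ a := by rw [(hzy.zpow_left _).eq]
    _ = x ^ a * y ^ ((k : ℤ) + 1) * z ^ (a * ((k : ℤ) + 1)) := by
        have he : a * ((k : ℤ) + 1) = a * (k : ℤ) + a := by ring
        rw [he, zpow_add]; group
  | pred k ih =>
    calc y ^ (-(k : ℤ) - 1) * x ^ a = y ^ (-k : ℤ) * (y⁻¹ * x ^ a) := by rw [zpow_sub_one]; group
    _ = y ^ (-k : ℤ) * (x ^ a * y⁻¹ * z ^ (-a)) := by rw [hinv]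
    _ = (y ^ (-k : ℤ) * x ^ a) * y⁻¹ * z ^ (-a) := by group
    _ = (x ^ a * y ^ (-k : ℤ) * z ^ (a * (-k : ℤ))) * y⁻¹ * z ^ (-a) := by rw [ih]
    _ = x ^ a * y ^ (-k : ℤ) * (z ^ (a * (-k : ℤ)) * y⁻¹) * z ^ (-a) := by group
    _ = x ^ a * y ^ (-k : ℤ) * (y⁻¹ * z ^ (a * (-k : ℤ))) * z ^ (-a) := by
        rw [(hzy.zpow_left _).inv_right.eq]
    _ = x ^ a * y ^ (-(k : ℤ) - 1) * z ^ (a * (-(k : ℤ) - 1)) := by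
        have he : a * (-(k : ℤ) - 1) = a * (-k : ℤ) + (-a) := by ring
        rw [he, zpow_add, show y ^ (-(k : ℤ) - 1) = y ^ (-(k:ℤ)) * y⁻¹ from by
          rw [zpow_sub_one]]; group

end CommAux

namespace GnIso

variable (n : ℕ)

/-- The generators of `Gn n`. -/
def X : Gn n := PresentedGroup.of 0
def Y : Gn n := PresentedGroup.of 1
def Z : Gn n := PresentedGroup.of 2

lemma rel_eq_one {r : FreeGroup (Fin 3)} (hr : r ∈ gnRels n) :
    PresentedGroup.mk (gnRels n) r = 1 :=
  (QuotientGroup.eq_one_iff r).2 (Subgroup.subset_normalClosure hr)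

lemma mem_rels_1 :
    ⁅(FreeGroup.of 0 : FreeGroup (Fin 3)), FreeGroup.of 1⁆ * ((FreeGroup.of 2 : FreeGroup (Fin 3)) ^ n)⁻¹ ∈ gnRels n :=
  Set.mem_insert _ _

lemma mem_rels_2 : ⁅(FreeGroup.of 0 : FreeGroup (Fin 3)), FreeGroup.of 2⁆ ∈ gnRels n :=
  Set.mem_insert_iff.2 (Or.inr (Set.mem_insert _ _))

lemma mem_rels_3 : ⁅(FreeGroup.of 1 : FreeGroup (Fin 3)), FreeGroup.of 2⁆ ∈ gnRels n :=
  Set.mem_insert_iff.2 (Or.inr (Set.mem_insert_iff.2 (Or.inr rfl)))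

lemma rel_xy : ⁅X n, Y n⁆ = Z n ^ n := by
  have := rel_eq_one n (mem_rels_1 n)
  rw [map_mul, map_commutatorElement, map_inv, map_pow] at this
  exact mul_inv_eq_one.1 this

lemma commute_ZX : Commute (Z n) (X n) := by
  have := rel_eq_one n (mem_rels_2 n)
  rw [map_commutatorElement] at this
  exact (commutatorElement_eq_one_iff_commute.1 this).symm

lemma commute_ZY : Commute (Z n) (Y n) := by
  have := rel_eq_one n (mem_rels_3 n)
  rw [map_commutatorElement] at this
  exact (commutatorElement_eq_one_iff_commute.1 this).symm

lemma yx_eq : Y n * X n = X n * Y n * Z n ^ (-(n : ℤ)) := by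
  have h := rel_xy n
  rw [commutatorElement_def] at h
  have : X n * Y n = Z n ^ n * (Y n * X n) := by
    rw [← h]; group
  rw [this]
  rw [← zpow_natCast (Z n) n]
  have hc : Commute (Z n ^ (n : ℤ)) (Y n * X n) :=
    ((commute_ZY n).mul_right (commute_ZX n)).zpow_left _
  rw [hc.eq]; group

lemma yx_pow (a b : ℤ) :
    Y n ^ b * X n ^ a = X n ^ a * Y n ^ b * Z n ^ (-(n : ℤ) * (a * b)) := by
  have h := aux_two ((commute_ZX n).zpow_left (-(n : ℤ)))
    ((commute_ZY n).zpow_left (-(n : ℤ))) (yx_eq n) a b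
  rw [h, ← zpow_mul]

end GnIso

namespace Hsb
variable {n : ℕ}

lemma Xzpow (a : ℤ) : (⟨1, 0, 0⟩ : Hsb n) ^ a = ⟨a, 0, 0⟩ := by
  induction a using Int.induction_on with
  | zero => rfl
  | succ k ih => rw [zpow_add_one, ih]; ext <;> simp
  | pred k ih => rw [zpow_sub_one, ih]; ext <;> simp <;> ring

lemma Yzpow (b : ℤ) : (⟨0, 1, 0⟩ : Hsb n) ^ b = ⟨0, b, 0⟩ := by
  induction b using Int.induction_on with
  | zero => rfl
  | succ k ih => rw [zpow_add_one, ih]; ext <;> simp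
  | pred k ih => rw [zpow_sub_one, ih]; ext <;> simp <;> ring

lemma Zzpow (c : ℤ) : (⟨0, 0, 1⟩ : Hsb n) ^ c = ⟨0, 0, c⟩ := by
  induction c using Int.induction_on with
  | zero => rfl
  | succ k ih => rw [zpow_add_one, ih]; ext <;> simp
  | pred k ih => rw [zpow_sub_one, ih]; ext <;> simp <;> ring

lemma Zpow (k : ℕ) : (⟨0, 0, 1⟩ : Hsb n) ^ k = ⟨0, 0, (k : ℤ)⟩ := by
  rw [← zpow_natCast, Zzpow]

end Hsb

namespace GnIso
variable (n : ℕ)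

/-- The map `Hsb n → Gn n`, sending `(a,b,c)` to `x^a y^b z^c`. -/
def sigma : Hsb n →* Gn n where
  toFun g := X n ^ g.a * Y n ^ g.b * Z n ^ g.c
  map_one' := by simp
  map_mul' g h := by
    show X n ^ (g.a + h.a) * Y n ^ (g.b + h.b) * Z n ^ (g.c + h.c - n * h.a * g.b)
      = (X n ^ g.a * Y n ^ g.b * Z n ^ g.c) * (X n ^ h.a * Y n ^ h.b * Z n ^ h.c)
    have c1 : Commute (Z n ^ g.c) (X n ^ h.a) :=
      ((commute_ZX n).zpow_left g.c).zpow_right h.a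
    have c2 : Commute (Z n ^ g.c) (Y n ^ h.b) :=
      ((commute_ZY n).zpow_left g.c).zpow_right h.b
    have c3 : Commute (Z n ^ (-(n : ℤ) * (h.a * g.b))) (Y n ^ h.b) :=
      ((commute_ZY n).zpow_left _).zpow_right h.b
    have c3' := c3.eq
    calc X n ^ (g.a + h.a) * Y n ^ (g.b + h.b) * Z n ^ (g.c + h.c - n * h.a * g.b)
        = X n ^ g.a * X n ^ h.a * Y n ^ g.b * (Y n ^ h.b * Z n ^ (-(n:ℤ) * (h.a * g.b))) *
            (Z n ^ g.c * Z n ^ h.c) := by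
          rw [zpow_add, zpow_add,
            show g.c + h.c - (n : ℤ) * h.a * g.b = (-(n:ℤ) * (h.a * g.b)) + (g.c + h.c) from by
              ring, zpow_add, zpow_add]
          group
    _ = X n ^ g.a * X n ^ h.a * Y n ^ g.b * (Z n ^ (-(n:ℤ) * (h.a * g.b)) * Y n ^ h.b) *
            (Z n ^ g.c * Z n ^ h.c) := by rw [← c3']
    _ = X n ^ g.a * (X n ^ h.a * Y n ^ g.b * Z n ^ (-(n:ℤ) * (h.a * g.b))) * Y n ^ h.b *
            (Z n ^ g.c * Z n ^ h.c) := by group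
    _ = X n ^ g.a * (Y n ^ g.b * X n ^ h.a) * Y n ^ h.b * (Z n ^ g.c * Z n ^ h.c) := by
          rw [← yx_pow]
    _ = X n ^ g.a * Y n ^ g.b * (X n ^ h.a * Y n ^ h.b) * (Z n ^ g.c * Z n ^ h.c) := by group
    _ = (X n ^ g.a * Y n ^ g.b * Z n ^ g.c) * (X n ^ h.a * Y n ^ h.b * Z n ^ h.c) := by
          rw [show X n ^ g.a * Y n ^ g.b * (X n ^ h.a * Y n ^ h.b) * (Z n ^ g.c * Z n ^ h.c)
              = X n ^ g.a * Y n ^ g.b * (X n ^ h.a * (Y n ^ h.b * Z n ^ g.c) * Z n ^ h.c) from by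
            group]
          rw [← c2.eq]
          rw [show X n ^ g.a * Y n ^ g.b * (X n ^ h.a * (Z n ^ g.c * Y n ^ h.b) * Z n ^ h.c)
              = X n ^ g.a * Y n ^ g.b * ((X n ^ h.a * Z n ^ g.c) * Y n ^ h.b * Z n ^ h.c) from by
            group]
          rw [← c1.eq]
          group

/-- The generator images in `Hsb n`. -/
def fgen : Fin 3 → Hsb n := ![⟨1, 0, 0⟩, ⟨0, 1, 0⟩, ⟨0, 0, 1⟩]

lemma fgen_rels : ∀ r ∈ gnRels n, FreeGroup.lift (fgen n) r = 1 := by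
  intro r hr
  rcases hr with h | h | h <;> subst h <;>
    simp only [map_mul, map_commutatorElement, map_inv, map_pow, FreeGroup.lift_apply_of,
      commutatorElement_def, fgen] <;>
  · ext <;> simp [Hsb.Zpow] <;> ring

/-- The map `Gn n → Hsb n`. -/
def theta : Gn n →* Hsb n := PresentedGroup.toGroup (fgen_rels n)

@[simp] lemma theta_X : theta n (X n) = ⟨1, 0, 0⟩ := PresentedGroup.toGroup.of _
@[simp] lemma theta_Y : theta n (Y n) = ⟨0, 1, 0⟩ := PresentedGroup.toGroup.of _
@[simp] lemma theta_Z : theta n (Z n) = ⟨0, 0, 1⟩ := PresentedGroup.toGroup.of _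

lemma theta_sigma (g : Hsb n) : theta n (sigma n g) = g := by
  show theta n (X n ^ g.a * Y n ^ g.b * Z n ^ g.c) = g
  rw [map_mul, map_mul, map_zpow, map_zpow, map_zpow, theta_X, theta_Y, theta_Z,
    Hsb.Xzpow, Hsb.Yzpow, Hsb.Zzpow]
  ext <;> simp

lemma sigma_theta (g : Gn n) : sigma n (theta n g) = g := by
  have : (sigma n).comp (theta n) = MonoidHom.id (Gn n) := by
    apply PresentedGroup.ext
    intro i
    fin_cases i
    · show sigma n (theta n (X n)) = X n
      rw [theta_X]
      show X n ^ (1:ℤ) * Y n ^ (0:ℤ) * Z n ^ (0:ℤ) = X n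
      simp
    · show sigma n (theta n (Y n)) = Y n
      rw [theta_Y]
      show X n ^ (0:ℤ) * Y n ^ (1:ℤ) * Z n ^ (0:ℤ) = Y n
      simp
    · show sigma n (theta n (Z n)) = Z n
      rw [theta_Z]
      show X n ^ (0:ℤ) * Y n ^ (0:ℤ) * Z n ^ (1:ℤ) = Z n
      simp
  exact DFunLike.congr_fun this g

/-- The isomorphism `Gn n ≃* Hsb n`. -/
def gnEquiv : Gn n ≃* Hsb n where
  toFun := theta n
  invFun := sigma n
  left_inv := sigma_theta n
  right_inv := theta_sigma n
  map_mul' := map_mul _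

end GnIso

/-- IIPP is invariant under group isomorphism. -/
lemma iipp_of_mulEquiv {G G' : Type*} [Group G] [Group G'] (e : G ≃* G') (h : IIPP G) :
    IIPP G' := by
  obtain ⟨H, K, hcomm, hH, hK, hfin⟩ := h
  have hsurj : Function.Surjective e.symm.toMonoidHom := e.symm.surjective
  refine ⟨H.comap e.symm.toMonoidHom, K.comap e.symm.toMonoidHom, ?_, ?_, ?_, ?_⟩
  · intro a ha b hb
    have := hcomm _ ha _ hb
    have h2 : e.symm (a * b) = e.symm (b * a) := by
      rw [map_mul, map_mul]; exact this
    exact e.symm.injective h2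
  · rw [Subgroup.index_comap_of_surjective _ hsurj]; exact hH
  · rw [Subgroup.index_comap_of_surjective _ hsurj]; exact hK
  · rw [Subgroup.comap_sup_eq _ _ _ hsurj]
    exact ⟨by rw [Subgroup.index_comap_of_surjective _ hsurj]; exact hfin.index_ne_zero⟩

namespace Hsb
variable {n : ℕ}

/-- The "determinant pairing" homomorphism `g ↦ g.a * q - g.b * p`. -/
def chi (n : ℕ) (p q : ℤ) : Hsb n →* Multiplicative ℤ where
  toFun g := Multiplicative.ofAdd (g.a * q - g.b * p)
  map_one' := by simp
  map_mul' g h := by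
    simp only [mul_a, mul_b, ← ofAdd_add]
    congr 1
    ring

lemma commute_iff (hn : 1 ≤ n) (g h : Hsb n) : g * h = h * g ↔ g.a * h.b = h.a * g.b := by
  constructor
  · intro hc
    have := congrArg Hsb.c hc
    simp only [mul_c] at this
    have h2 : (n : ℤ) * (g.a * h.b) = (n : ℤ) * (h.a * g.b) := by linarith
    have hn' : (n : ℤ) ≠ 0 := by exact_mod_cast Nat.one_le_iff_ne_zero.1 hn
    exact mul_left_cancel₀ hn' h2
  · intro hab
    ext
    · simp [add_comm]
    · simp [add_comm]
    · simp only [mul_c]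
      linear_combination (n : ℤ) * hab

lemma commutator_eq (g h : Hsb n) :
    ⁅g, h⁆ = (⟨0, 0, n * (g.a * h.b - h.a * g.b)⟩ : Hsb n) := by
  rw [commutatorElement_def]
  ext <;> simp <;> ring

lemma c_zpow (u : ℤ) (t : ℤ) : (⟨0, 0, u⟩ : Hsb n) ^ t = ⟨0, 0, u * t⟩ := by
  have h1 : (⟨0, 0, u⟩ : Hsb n) = (⟨0, 0, 1⟩ : Hsb n) ^ u := by rw [Zzpow]
  rw [h1, ← zpow_mul, Zzpow]

/-- The center-like subgroup `{g | g.a = 0 ∧ g.b = 0}`. -/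
def cen (n : ℕ) : Subgroup (Hsb n) where
  carrier := {g | g.a = 0 ∧ g.b = 0}
  one_mem' := ⟨rfl, rfl⟩
  mul_mem' := fun ha hb => ⟨by simp [ha.1, hb.1], by simp [ha.2, hb.2]⟩
  inv_mem' := fun ha => ⟨by simp [ha.1], by simp [ha.2]⟩

lemma cen_central (w : Hsb n) (hw : w ∈ cen n) (g : Hsb n) : w * g = g * w := by
  obtain ⟨h1, h2⟩ := hw
  ext <;> simp [h1, h2, add_comm]

instance : (cen n).Normal := by
  constructor
  intro w hw g
  have := cen_central w hw g
  rw [← this, mul_assoc, mul_inv_cancel, mul_one]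
  exact hw

end Hsb

open scoped Pointwise

namespace Hsb
variable {n : ℕ}

@[simp] lemma chi_apply (p q : ℤ) (g : Hsb n) :
    chi n p q g = Multiplicative.ofAdd (g.a * q - g.b * p) := rfl

lemma cen_le_sup_right {H : Subgroup (Hsb n)} : cen n ≤ H ⊔ cen n := le_sup_right

/-- If `H` contains a "nondegenerate" pair, and `H`, `K` commute elementwise with
`(H ⊔ K).index ≠ 0`, then `H` has finite index. -/
lemma index_ne_zero_of_pair (hn : 1 ≤ n) (H K : Subgroup (Hsb n))
    (hcomm : ∀ a ∈ H, ∀ b ∈ K, a * b = b * a) (hfin : (H ⊔ K).index ≠ 0)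
    {h1 h2 : Hsb n} (m1 : h1 ∈ H) (m2 : h2 ∈ H)
    (hd : h1.a * h2.b - h2.a * h1.b ≠ 0) : H.index ≠ 0 := by
  set d : ℤ := h1.a * h2.b - h2.a * h1.b with hd_def
  set N : ℤ := (n : ℤ) * d with hN_def
  have hn' : (n : ℤ) ≠ 0 := by exact_mod_cast Nat.one_le_iff_ne_zero.1 hn
  have hNne : N ≠ 0 := mul_ne_zero hn' hd
  have hzeta : (⟨0, 0, N⟩ : Hsb n) ∈ H := by
    have hc : ⁅h1, h2⁆ ∈ H := by
      rw [commutatorElement_def]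
      exact H.mul_mem (H.mul_mem (H.mul_mem m1 m2) (H.inv_mem m1)) (H.inv_mem m2)
    rwa [commutator_eq] at hc
  have hKcen : K ≤ cen n := by
    intro k hk
    have e1 : h1.a * k.b = k.a * h1.b := (commute_iff hn h1 k).1 (hcomm h1 m1 k hk)
    have e2 : h2.a * k.b = k.a * h2.b := (commute_iff hn h2 k).1 (hcomm h2 m2 k hk)
    constructor
    · have hz : d * k.a = 0 := by
        rw [hd_def]; linear_combination h2.a * e1 - h1.a * e2
      exact (mul_eq_zero.1 hz).resolve_left hd
    · have hz : d * k.b = 0 := by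
        rw [hd_def]; linear_combination h2.b * e1 - h1.b * e2
      exact (mul_eq_zero.1 hz).resolve_left hd
  set M : Subgroup (Hsb n) := H ⊔ cen n with hM_def
  have hHM : H ≤ M := le_sup_left
  have hMind : M.index ≠ 0 := by
    intro h0
    have hdvd : M.index ∣ (H ⊔ K).index :=
      Subgroup.index_dvd_of_le (sup_le le_sup_left (hKcen.trans le_sup_right))
    rw [h0] at hdvd
    exact hfin (zero_dvd_iff.1 hdvd)
  have hcenM : cen n ≤ M := le_sup_right
  have hfinQ : Finite (M ⧸ H.subgroupOf M) := by
    set A : ℕ := N.natAbs with hA_def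
    have hA : 0 < A := Int.natAbs_pos.2 hNne
    have hNA : N ∣ (A : ℤ) := Int.dvd_natAbs.2 dvd_rfl
    refine Finite.of_surjective
      (fun i : Fin A => QuotientGroup.mk (s := H.subgroupOf M)
        (⟨⟨0, 0, (i : ℤ)⟩, hcenM ⟨rfl, rfl⟩⟩ : M)) ?_
    intro q
    obtain ⟨m, rfl⟩ := QuotientGroup.mk_surjective q
    have hm : (m : Hsb n) ∈ (H : Set (Hsb n)) * (cen n : Set (Hsb n)) := by
      rw [← Subgroup.mul_normal]; exact m.2
    obtain ⟨h, hh, w, hw, hmul⟩ := hm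
    have hr0 : (0 : ℤ) ≤ w.c % (A : ℤ) := Int.emod_nonneg _ (by exact_mod_cast hA.ne')
    have hrA : (w.c % (A : ℤ)).toNat < A := by
      have := Int.emod_lt_of_pos w.c (by exact_mod_cast hA : (0:ℤ) < (A:ℤ))
      omega
    refine ⟨⟨(w.c % (A : ℤ)).toNat, hrA⟩, ?_⟩
    rw [QuotientGroup.eq]
    rw [Subgroup.mem_subgroupOf]
    have hcoe : ((((⟨⟨0, 0, ((w.c % (A : ℤ)).toNat : ℤ)⟩, hcenM ⟨rfl, rfl⟩⟩ : M))⁻¹ * m : M) : Hsb n)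
        = (⟨0, 0, ((w.c % (A : ℤ)).toNat : ℤ)⟩ : Hsb n)⁻¹ * (m : Hsb n) := rfl
    rw [hcoe, ← hmul]
    set r : ℤ := ((w.c % (A : ℤ)).toNat : ℤ) with hr_def
    have hrr : r = w.c % (A : ℤ) := Int.toNat_of_nonneg hr0
    have hdvd : N ∣ (w.c - r) := by
      rw [hrr]
      exact hNA.trans (Int.dvd_self_sub_of_emod_eq rfl)
    obtain ⟨t, ht⟩ := hdvd
    have hwab : w.a = 0 ∧ w.b = 0 := hw
    have key : (⟨0, 0, r⟩ : Hsb n)⁻¹ * (h * w) = h * (⟨0, 0, N⟩ : Hsb n) ^ t := by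
      rw [c_zpow]
      ext
      · simp [hwab.1]
      · simp [hwab.2]
      · simp [hwab.1, hwab.2]
        linarith [ht]
    rw [key]
    exact H.mul_mem hh (H.zpow_mem hzeta t)
  have hrel : H.relIndex M ≠ 0 := Subgroup.index_ne_zero_of_finite
  rw [← Subgroup.relIndex_mul_index hHM]
  exact Nat.mul_ne_zero hrel hMind

end Hsb

namespace Hsb
variable {n : ℕ}

/-- If both subgroups lie in the kernel of a nontrivial `chi`, their join has
infinite index. -/
lemma sup_index_zero_of_ker {p q : ℤ} (hpq : ¬(p = 0 ∧ q = 0)) {H K : Subgroup (Hsb n)}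
    (hH : H ≤ (chi n p q).ker) (hK : K ≤ (chi n p q).ker) : (H ⊔ K).index = 0 := by
  have hker : (chi n p q).ker.index = 0 := by
    rw [Subgroup.index_ker]
    have ht : q * q + p * p ≠ 0 := by
      intro h0
      exact hpq ⟨by nlinarith [mul_self_nonneg p, mul_self_nonneg q],
        by nlinarith [mul_self_nonneg p, mul_self_nonneg q]⟩
    have hx : Multiplicative.ofAdd (q * q + p * p) ∈ (chi n p q).range :=
      ⟨⟨q, -p, 0⟩, by simp only [chi_apply]; congr 1; ring⟩
    have : Infinite ((chi n p q).range) := by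
      refine Infinite.of_injective
        (fun k : ℤ => (⟨(Multiplicative.ofAdd (q * q + p * p)) ^ k,
          Subgroup.zpow_mem _ hx k⟩ : (chi n p q).range)) ?_
      intro k1 k2 h12
      have h13 : (Multiplicative.ofAdd (q * q + p * p)) ^ k1
          = (Multiplicative.ofAdd (q * q + p * p)) ^ k2 := congrArg Subtype.val h12
      rw [← ofAdd_zsmul, ← ofAdd_zsmul] at h13
      have h14 : k1 * (q * q + p * p) = k2 * (q * q + p * p) := by
        simpa [smul_eq_mul] using Multiplicative.ofAdd.injective h13
      exact mul_right_cancel₀ ht h14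
    exact Nat.card_eq_zero_of_infinite
  have hdvd : (chi n p q).ker.index ∣ (H ⊔ K).index :=
    Subgroup.index_dvd_of_le (sup_le hH hK)
  rw [hker] at hdvd
  exact zero_dvd_iff.1 hdvd

lemma mem_chi_ker {p q : ℤ} {g : Hsb n} (h : g.a * q - g.b * p = 0) :
    g ∈ (chi n p q).ker := by
  rw [MonoidHom.mem_ker, chi_apply, h]
  rfl

theorem not_iipp (hn : 1 ≤ n) : ¬ IIPP (Hsb n) := by
  rintro ⟨H, K, hcomm, hH0, hK0, hfin⟩
  have hfi := hfin.index_ne_zero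
  by_cases hHp : ∃ h1, h1 ∈ H ∧ ∃ h2, h2 ∈ H ∧ h1.a * h2.b - h2.a * h1.b ≠ 0
  · obtain ⟨h1, m1, h2, m2, hd⟩ := hHp
    exact index_ne_zero_of_pair hn H K hcomm hfi m1 m2 hd hH0
  by_cases hKp : ∃ k1, k1 ∈ K ∧ ∃ k2, k2 ∈ K ∧ k1.a * k2.b - k2.a * k1.b ≠ 0
  · obtain ⟨k1, m1, k2, m2, hd⟩ := hKp
    refine index_ne_zero_of_pair hn K H (fun a ha b hb => (hcomm b hb a ha).symm)
      (by rwa [sup_comm] at hfi) m1 m2 hd hK0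
  push_neg at hHp hKp
  apply hfi
  by_cases hex : ∃ g, (g ∈ H ∨ g ∈ K) ∧ ¬(g.a = 0 ∧ g.b = 0)
  · obtain ⟨g0, hg0, hab⟩ := hex
    refine sup_index_zero_of_ker (p := g0.a) (q := g0.b) hab ?_ ?_
    · intro h hh
      refine mem_chi_ker ?_
      rcases hg0 with hg0 | hg0
      · have := hHp h hh g0 hg0
        linarith
      · have := (commute_iff hn h g0).1 (hcomm h hh g0 hg0)
        linarith
    · intro k hk
      refine mem_chi_ker ?_
      rcases hg0 with hg0 | hg0
      · have := (commute_iff hn g0 k).1 (hcomm g0 hg0 k hk)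
        linarith
      · have := hKp k hk g0 hg0
        linarith
  · push_neg at hex
    refine sup_index_zero_of_ker (p := 0) (q := 1) (by simp) ?_ ?_
    · intro h hh
      exact mem_chi_ker (by have := (hex h (Or.inl hh)).1; linarith)
    · intro k hk
      exact mem_chi_ker (by have := (hex k (Or.inr hk)).1; linarith)

end Hsb

/-- for `n ≥ 1`, the group `G_n` is not IIPP. -/
theorem stmt16 (n : ℕ) (hn : 1 ≤ n) : ¬ IIPP (Gn n) := by
  intro h
  exact Hsb.not_iipp hn (iipp_of_mulEquiv (GnIso.gnEquiv n) h)
end
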